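/- arXiv:1211.7138 — 6 statements merged into one kernel-verified Lean document; each statement's English description precedes it below -/
import Mathlib

section
/- Let A ⊆ ℝⁿ be a cone, i.e., A is measurable and tA = A for all t > 0. Then ∫_{ℝⁿ} (Σ_{i=1}^n (1 - y_i²)) 1_A(y) dγ_n(y) = 0. -/
open MeasureTheory Pointwise

/-- The standard Gaussian probability measure `γₙ` on `ℝⁿ`. -/
noncomputable def gauss (n : ℕ) : Measure (EuclideanSpace ℝ (Fin n)) :=
  volume.withDensity
    (fun y => ENNReal.ofReal ((2 * Real.pi) ^ (-(n : ℝ) / 2) * Real.exp (-‖y‖ ^ 2 / 2)))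

/-- The Ornstein-Uhlenbeck (noise) operator `T_ρ`. -/
noncomputable def OU (n : ℕ) (ρ : ℝ) (f : EuclideanSpace ℝ (Fin n) → ℝ)
    (x : EuclideanSpace ℝ (Fin n)) : ℝ :=
  ∫ y, f (ρ • x + Real.sqrt (1 - ρ ^ 2) • y) ∂(gauss n)

lemma coneIntA (n : ℕ) {b : ℝ} (hb : 0 < b) :
    Integrable (fun y : EuclideanSpace ℝ (Fin n) => Real.exp (-b * ‖y‖ ^ 2)) := by
  have h := (GaussianFourier.integrable_cexp_neg_mul_sq_norm_add (V := EuclideanSpace ℝ (Fin n))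
    (b := (b : ℂ)) (by simpa using hb) 0 0).norm
  simp only [Complex.norm_exp] at h
  have key : ∀ y : EuclideanSpace ℝ (Fin n),
      ((-(b:ℂ) * (‖y‖:ℂ) ^ 2 + 0 * ((inner ℝ (0 : EuclideanSpace ℝ (Fin n)) y : ℝ) : ℂ)).re)
        = -b * ‖y‖ ^ 2 := by
    intro y
    simp [Complex.ofReal_pow]
    left
    rw [← Complex.ofReal_pow, Complex.ofReal_re]
  simp only [key] at h
  exact h

lemma coneIntB (n : ℕ) {b : ℝ} (hb : 0 < b) :
    Integrable (fun y : EuclideanSpace ℝ (Fin n) => ‖y‖ ^ 2 * Real.exp (-b * ‖y‖ ^ 2)) := by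
  apply ((coneIntA n (b := b/2) (by linarith)).const_mul (2/b)).mono
  · exact (Continuous.mul (by fun_prop) (by fun_prop)).aestronglyMeasurable
  · refine Filter.Eventually.of_forall fun y => ?_
    have h1 : 0 ≤ ‖y‖ ^ 2 := sq_nonneg _
    have hb' : (0:ℝ) < 2 / b := by positivity
    have h2 : b / 2 * ‖y‖ ^ 2 ≤ Real.exp (b / 2 * ‖y‖ ^ 2) := by
      linarith [Real.add_one_le_exp (b / 2 * ‖y‖ ^ 2)]
    have h3 := mul_le_mul_of_nonneg_left h2 hb'.le
    have h4 : 2 / b * (b / 2 * ‖y‖ ^ 2) = ‖y‖ ^ 2 := by field_simp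
    rw [h4] at h3
    rw [Real.norm_eq_abs, abs_of_nonneg (by positivity), Real.norm_eq_abs,
      abs_of_nonneg (by positivity)]
    calc ‖y‖ ^ 2 * Real.exp (-b * ‖y‖ ^ 2)
        ≤ (2 / b * Real.exp (b / 2 * ‖y‖ ^ 2)) * Real.exp (-b * ‖y‖ ^ 2) :=
          mul_le_mul_of_nonneg_right h3 (Real.exp_pos _).le
      _ = 2 / b * Real.exp (-(b/2) * ‖y‖ ^ 2) := by
          rw [mul_assoc, ← Real.exp_add]; ring_nf

/-- The key Lebesgue-measure statement: the integral of `(n - ‖y‖²) e^{-‖y‖²/2}` over a cone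
vanishes. -/
lemma cone_key (n : ℕ) (A : Set (EuclideanSpace ℝ (Fin n)))
    (hA : MeasurableSet A) (hcone : ∀ t : ℝ, 0 < t → t • A = A) :
    ∫ y in A, ((n : ℝ) - ‖y‖ ^ 2) * Real.exp (-‖y‖ ^ 2 / 2) = 0 := by
  classical
  set F : ℝ → EuclideanSpace ℝ (Fin n) → ℝ :=
    fun t y => Real.exp (-(t ^ 2 * ‖y‖ ^ 2) / 2) with hF
  set C : ℝ := ∫ y in A, F 1 y with hC
  have hmem : ∀ t : ℝ, 0 < t → ∀ x : EuclideanSpace ℝ (Fin n), t • x ∈ A ↔ x ∈ A := by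
    intro t ht x
    conv_lhs => rw [← hcone t ht]
    exact Set.smul_mem_smul_set_iff₀ (ne_of_gt ht) A x
  -- scaling identity
  have hscale : ∀ t : ℝ, 0 < t → (∫ y in A, F t y) = (t ^ n)⁻¹ * C := by
    intro t ht
    have h0 := MeasureTheory.Measure.integral_comp_smul (μ := volume)
      (f := A.indicator fun x => Real.exp (-(1 ^ 2 * ‖x‖ ^ 2) / 2)) t
    have h1 : (fun x : EuclideanSpace ℝ (Fin n) =>
        (A.indicator fun x => Real.exp (-(1 ^ 2 * ‖x‖ ^ 2) / 2)) (t • x))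
        = A.indicator (F t) := by
      funext x
      by_cases hx : x ∈ A
      · rw [Set.indicator_of_mem hx, Set.indicator_of_mem ((hmem t ht x).mpr hx)]
        have : ‖t • x‖ = t * ‖x‖ := by
          rw [norm_smul, Real.norm_eq_abs, abs_of_pos ht]
        rw [hF]; dsimp only; rw [this]; ring_nf
      · rw [Set.indicator_of_notMem hx,
          Set.indicator_of_notMem (fun h => hx ((hmem t ht x).mp h))]
    rw [h1] at h0
    rw [← integral_indicator hA, h0, finrank_euclideanSpace_fin,
      abs_of_nonneg (inv_nonneg.2 (pow_nonneg ht.le _)), integral_indicator hA]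
    simp [smul_eq_mul, hC, hF]
  -- derivative via dominated convergence
  have hkey := hasDerivAt_integral_of_dominated_loc_of_deriv_le
    (μ := volume.restrict A) (F := F)
    (F' := fun t y => (-t * ‖y‖ ^ 2) * Real.exp (-(t ^ 2 * ‖y‖ ^ 2) / 2)) (x₀ := (1:ℝ))
    (bound := fun y => (3/2) * (‖y‖ ^ 2 * Real.exp (-(1/8) * ‖y‖ ^ 2)))
    (s := Metric.ball 1 (1/2)) (Metric.ball_mem_nhds _ (by norm_num))
    (Filter.Eventually.of_forall fun t => (Continuous.aestronglyMeasurable (by fun_prop)))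
    ?_ (Continuous.aestronglyMeasurable (by fun_prop)) ?_ ?_ ?_
  · obtain ⟨hint, hderiv⟩ := hkey
    -- the function is locally equal to `t ↦ (t^n)⁻¹ * C`
    have heq : (fun t => ∫ y in A, F t y) =ᶠ[nhds (1:ℝ)] fun t => (t ^ n)⁻¹ * C := by
      filter_upwards [Ioi_mem_nhds (by norm_num : (0:ℝ) < 1)] with t ht
      exact hscale t ht
    have hg : HasDerivAt (fun t : ℝ => (t ^ n)⁻¹ * C) (-(n : ℝ) * C) 1 := by
      have h2 : HasDerivAt (fun t : ℝ => (t ^ n)⁻¹)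
          (-((n : ℝ) * (1:ℝ) ^ (n - 1)) / ((1:ℝ) ^ n) ^ 2) 1 :=
        (hasDerivAt_pow n 1).inv (by simp)
      have h3 := h2.mul_const C
      refine h3.congr_deriv ?_
      simp
    have hΦ : HasDerivAt (fun t => ∫ y in A, F t y) (-(n : ℝ) * C) 1 :=
      hg.congr_of_eventuallyEq heq
    have huniq : (∫ y in A, (-(1:ℝ) * ‖y‖ ^ 2) * Real.exp (-((1:ℝ) ^ 2 * ‖y‖ ^ 2) / 2))
        = -(n : ℝ) * C := hderiv.unique hΦ
    -- now split the target integral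
    have hie : IntegrableOn (fun y : EuclideanSpace ℝ (Fin n) =>
        Real.exp (-(1 ^ 2 * ‖y‖ ^ 2) / 2)) A := by
      apply Integrable.restrict (μ := volume)
      have := coneIntA n (b := (1:ℝ)/2) (by norm_num)
      apply this.congr
      refine Filter.Eventually.of_forall fun y => ?_
      ring_nf
    have hie2 : IntegrableOn (fun y : EuclideanSpace ℝ (Fin n) =>
        (-(1:ℝ) * ‖y‖ ^ 2) * Real.exp (-((1:ℝ) ^ 2 * ‖y‖ ^ 2) / 2)) A := by
      apply Integrable.restrict (μ := volume)
      have := ((coneIntB n (b := (1:ℝ)/2) (by norm_num)).neg)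
      apply this.congr
      refine Filter.Eventually.of_forall fun y => ?_
      simp only [Pi.neg_apply]
      ring_nf
    have hsplit : ∫ y in A, ((n : ℝ) - ‖y‖ ^ 2) * Real.exp (-‖y‖ ^ 2 / 2)
        = (n : ℝ) * C + ∫ y in A, (-(1:ℝ) * ‖y‖ ^ 2) * Real.exp (-((1:ℝ) ^ 2 * ‖y‖ ^ 2) / 2) := by
      rw [hC]
      rw [← integral_const_mul, ← integral_add (hie.const_mul _) hie2]
      apply setIntegral_congr_fun hA
      intro y _
      simp only [hF]
      ring_nf
    rw [hsplit, huniq]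
    ring
  · -- Integrable (F 1)
    apply Integrable.restrict (μ := volume)
    have := coneIntA n (b := (1:ℝ)/2) (by norm_num)
    apply this.congr
    refine Filter.Eventually.of_forall fun y => ?_
    simp only [hF]
    ring_nf
  · -- bound
    refine Filter.Eventually.of_forall fun y => fun t ht => ?_
    have h1 : |t - 1| < 1/2 := by
      have := Metric.mem_ball.mp ht
      rwa [Real.dist_eq] at this
    have ht1 : 1/2 < t := by cases abs_lt.mp h1; linarith
    have ht2 : t < 3/2 := by cases abs_lt.mp h1; linarith
    have hy : 0 ≤ ‖y‖ ^ 2 := sq_nonneg _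
    rw [Real.norm_eq_abs, abs_mul, abs_mul, abs_of_nonneg (Real.exp_pos _).le,
      abs_of_nonneg hy, abs_neg, abs_of_pos (by linarith)]
    have hexp : Real.exp (-(t ^ 2 * ‖y‖ ^ 2) / 2) ≤ Real.exp (-(1/8) * ‖y‖ ^ 2) := by
      apply Real.exp_le_exp.mpr
      have ht4 : (1/4:ℝ) ≤ t ^ 2 := by nlinarith
      nlinarith [mul_le_mul_of_nonneg_right ht4 hy]
    calc t * ‖y‖ ^ 2 * Real.exp (-(t ^ 2 * ‖y‖ ^ 2) / 2)
        ≤ (3/2) * ‖y‖ ^ 2 * Real.exp (-(1/8) * ‖y‖ ^ 2) := by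
          apply mul_le_mul (by nlinarith) hexp (Real.exp_pos _).le (by positivity)
      _ = 3/2 * (‖y‖ ^ 2 * Real.exp (-(1/8) * ‖y‖ ^ 2)) := by ring
  · -- bound integrable
    exact ((coneIntB n (b := (1:ℝ)/8) (by norm_num)).const_mul (3/2)).restrict
  · -- differentiability
    refine Filter.Eventually.of_forall fun y => fun t _ => ?_
    have h1 : HasDerivAt (fun t : ℝ => -(t ^ 2 * ‖y‖ ^ 2) / 2)
        (-((2:ℕ) * t ^ (2-1) * ‖y‖ ^ 2) / 2) t :=
      (((hasDerivAt_pow 2 t).mul_const (‖y‖ ^ 2)).neg.div_const 2)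
    have h2 := h1.exp
    refine h2.congr_deriv ?_
    push_cast
    ring

theorem cone_integral_zero (n : ℕ) (A : Set (EuclideanSpace ℝ (Fin n)))
    (hA : MeasurableSet A) (hcone : ∀ t : ℝ, 0 < t → t • A = A) :
    ∫ y in A, (∑ i, (1 - (y i) ^ 2)) ∂(gauss n) = 0 := by
  have hc : (0:ℝ) < (2 * Real.pi) ^ (-(n : ℝ) / 2) :=
    Real.rpow_pos_of_pos (by positivity) _
  have hgauss : gauss n = volume.withDensity
      (fun y => (((2 * Real.pi) ^ (-(n : ℝ) / 2) * Real.exp (-‖y‖ ^ 2 / 2)).toNNReal : ENNReal)) :=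
    rfl
  rw [hgauss, setIntegral_withDensity_eq_setIntegral_smul
    (by fun_prop : Measurable fun y : EuclideanSpace ℝ (Fin n) =>
      ((2 * Real.pi) ^ (-(n : ℝ) / 2) * Real.exp (-‖y‖ ^ 2 / 2)).toNNReal) _ hA]
  have hptwise : ∀ y : EuclideanSpace ℝ (Fin n),
      (((2 * Real.pi) ^ (-(n : ℝ) / 2) * Real.exp (-‖y‖ ^ 2 / 2)).toNNReal : NNReal)
        • (∑ i, (1 - (y i) ^ 2))
      = (2 * Real.pi) ^ (-(n : ℝ) / 2)
        * (((n : ℝ) - ‖y‖ ^ 2) * Real.exp (-‖y‖ ^ 2 / 2)) := by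
    intro y
    have hnorm : ‖y‖ ^ 2 = ∑ i, (y i) ^ 2 := by
      rw [EuclideanSpace.norm_eq, Real.sq_sqrt (Finset.sum_nonneg fun i _ => by positivity)]
      exact Finset.sum_congr rfl fun i _ => by rw [Real.norm_eq_abs, sq_abs]
    have hsum : (∑ i, (1 - (y i) ^ 2)) = (n : ℝ) - ‖y‖ ^ 2 := by
      rw [Finset.sum_sub_distrib, Finset.sum_const, Finset.card_fin, hnorm]
      simp
    rw [NNReal.smul_def, Real.coe_toNNReal _ (by positivity), hsum, smul_eq_mul]
    ring
  rw [integral_congr_ae (Filter.Eventually.of_forall fun y => hptwise y), integral_const_mul,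
    cone_key n A hA hcone, mul_zero]
end

section
/- Fix k = 3, n ≥ 2, ρ ∈ (0,1). Let {C_p}_{p=1}^3 ⊂ ℝ² be a simplicial conical partition and set B_p := C_p × ℝ^{n-2} for each p. Fix i, j ∈ {1,2,3} with i ≠ j, and assume B_i ∩ B_j ⊆ {x ∈ ℝⁿ : x_1 = 0}, B_i ⊆ {x ∈ ℝⁿ : x_1 ≥ 0}, and B_j is the image of B_i under the reflection x ↦ (-x_1, x_2, …, x_n). Then for every x ∈ B_i with x_1 > √n √(1-ρ²)/ρ, ∫_{ℝⁿ} (Σ_{ℓ=1}^n (1 - y_ℓ²)) (1_{B_i} - 1_{B_j})(xρ + y√(1-ρ²)) dγ_n(y) ≥ 0. -/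
open MeasureTheory

/-- A simplicial conical partition: the Voronoi cells of nonzero vectors `z₁,…,z_k`. -/
def IsSimplicialConicalPartition (n k : ℕ)
    (A : Fin k → Set (EuclideanSpace ℝ (Fin n))) : Prop :=
  ∃ z : Fin k → EuclideanSpace ℝ (Fin n), (∀ i, z i ≠ 0) ∧
    ∀ i, A i = {x | ∀ j, (inner ℝ x (z j) : ℝ) ≤ (inner ℝ x (z i) : ℝ)}

/-- Projection of `ℝⁿ` onto the first two coordinates. -/
def proj2 (n : ℕ) (h : 2 ≤ n) (x : EuclideanSpace ℝ (Fin n)) :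
    EuclideanSpace ℝ (Fin 2) :=
  WithLp.toLp 2 (fun i => x (Fin.castLE h i))

/-- Reflection of `ℝⁿ` in the first coordinate, `x ↦ (-x₁, x₂, …, xₙ)`. -/
def reflFirst (n : ℕ) (h : 2 ≤ n) (x : EuclideanSpace ℝ (Fin n)) :
    EuclideanSpace ℝ (Fin n) :=
  WithLp.toLp 2 (Function.update x.ofLp (Fin.castLE h 0) (-(x (Fin.castLE h 0))))

open Set Filter
open scoped NNReal ENNReal


/-- `t * exp (-(c*t)) ≤ 1/c` for `t ≥ 0`, `c > 0`. -/
lemma texp_le {c t : ℝ} (hc : 0 < c) (ht : 0 ≤ t) : t * Real.exp (-(c * t)) ≤ 1 / c := by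
  have h1 : c * t ≤ Real.exp (c * t) := by
    have := Real.add_one_le_exp (c * t); linarith
  have hE : 0 < Real.exp (c * t) := Real.exp_pos _
  rw [Real.exp_neg]
  rw [mul_inv_le_iff₀ hE]
  calc t ≤ Real.exp (c * t) / c := by rw [le_div_iff₀ hc]; linarith [mul_comm c t]
  _ = 1 / c * Real.exp (c * t) := by ring

lemma intExp (n : ℕ) {b : ℝ} (hb : 0 < b) :
    Integrable (fun v : EuclideanSpace ℝ (Fin n) => Real.exp (-(b * ‖v‖ ^ 2))) := by
  have h := (GaussianFourier.integrable_cexp_neg_mul_sq_norm_add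
    (V := EuclideanSpace ℝ (Fin n)) (b := (b : ℂ)) (by simpa using hb) 0 0).norm
  refine h.congr (Filter.Eventually.of_forall fun v => ?_)
  simp only [Complex.norm_exp]
  congr 1
  simp only [Complex.add_re, Complex.mul_re, Complex.zero_re, Complex.zero_im,
    Complex.neg_re, Complex.neg_im, Complex.ofReal_re, Complex.ofReal_im,
    ← Complex.ofReal_pow]
  ring

lemma intSqExp (n : ℕ) {b : ℝ} (hb : 0 < b) :
    Integrable (fun v : EuclideanSpace ℝ (Fin n) => ‖v‖ ^ 2 * Real.exp (-(b * ‖v‖ ^ 2))) := by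
  have hb2 : 0 < b / 2 := by linarith
  refine ((intExp n hb2).const_mul (2 / b)).mono'
    ((continuous_norm.pow 2).mul
      ((continuous_const.mul (continuous_norm.pow 2)).neg.rexp)).aestronglyMeasurable
    (Filter.Eventually.of_forall fun v => ?_)
  have hq : (0:ℝ) ≤ ‖v‖ ^ 2 := by positivity
  have hsplit : Real.exp (-(b * ‖v‖ ^ 2))
      = Real.exp (-(b / 2 * ‖v‖ ^ 2)) * Real.exp (-(b / 2 * ‖v‖ ^ 2)) := by
    rw [← Real.exp_add]; ring_nf
  have h1 : ‖v‖ ^ 2 * Real.exp (-(b / 2 * ‖v‖ ^ 2)) ≤ 1 / (b / 2) := texp_le hb2 hq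
  have hE : (0:ℝ) ≤ Real.exp (-(b / 2 * ‖v‖ ^ 2)) := (Real.exp_pos _).le
  rw [Real.norm_eq_abs, abs_of_nonneg (by positivity)]
  calc ‖v‖ ^ 2 * Real.exp (-(b * ‖v‖ ^ 2))
      = (‖v‖ ^ 2 * Real.exp (-(b / 2 * ‖v‖ ^ 2))) * Real.exp (-(b / 2 * ‖v‖ ^ 2)) := by
        rw [hsplit]; ring
    _ ≤ (1 / (b / 2)) * Real.exp (-(b / 2 * ‖v‖ ^ 2)) := by
        exact mul_le_mul_of_nonneg_right h1 hE
    _ = 2 / b * Real.exp (-(b / 2 * ‖v‖ ^ 2)) := by rw [one_div_div]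

/-- The Phi family: `r ↦ 1_G(y) rⁿ e^{-r²‖y‖²/2}`. -/
noncomputable def PhiF (n : ℕ) (G : Set (EuclideanSpace ℝ (Fin n))) (r : ℝ)
    (y : EuclideanSpace ℝ (Fin n)) : ℝ :=
  G.indicator (fun y => r ^ n * Real.exp (-(r ^ 2 * ‖y‖ ^ 2) / 2)) y

noncomputable def PhiF' (n : ℕ) (G : Set (EuclideanSpace ℝ (Fin n))) (r : ℝ)
    (y : EuclideanSpace ℝ (Fin n)) : ℝ :=
  G.indicator (fun y => ((n : ℝ) * r ^ (n - 1) - r ^ (n + 1) * ‖y‖ ^ 2)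
    * Real.exp (-(r ^ 2 * ‖y‖ ^ 2) / 2)) y

lemma PhiF_hasDeriv (n : ℕ) (G : Set (EuclideanSpace ℝ (Fin n))) (r : ℝ)
    (y : EuclideanSpace ℝ (Fin n)) :
    HasDerivAt (fun r => PhiF n G r y) (PhiF' n G r y) r := by
  by_cases hy : y ∈ G
  · simp only [PhiF, PhiF', Set.indicator_of_mem hy]
    have h1 : HasDerivAt (fun r : ℝ => r ^ n) ((n : ℝ) * r ^ (n - 1)) r := hasDerivAt_pow n r
    have h2 : HasDerivAt (fun r : ℝ => -(r ^ 2 * ‖y‖ ^ 2) / 2)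
        (-(2 * r ^ 1 * ‖y‖ ^ 2) / 2) r :=
      (((hasDerivAt_pow 2 r).mul_const (‖y‖ ^ 2)).neg).div_const 2
    have h3 := h2.exp
    have h4 := h1.mul h3
    convert h4 using 1
    · rfl
    · rfl
    · rfl
    ring
  · simp only [PhiF, PhiF', Set.indicator_of_notMem hy]
    exact hasDerivAt_const r 0

lemma keyStar (n : ℕ) (G : Set (EuclideanSpace ℝ (Fin n))) (hGm : MeasurableSet G)
    (hstar : ∀ y ∈ G, ∀ r : ℝ, 0 ≤ r → r ≤ 1 → r • y ∈ G) :
    0 ≤ ∫ y, G.indicator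
      (fun y => ((n : ℝ) - ‖y‖ ^ 2) * Real.exp (-‖y‖ ^ 2 / 2)) y := by
  classical
  -- continuity facts
  have hcont : ∀ r : ℝ, Continuous fun y : EuclideanSpace ℝ (Fin n) =>
      r ^ n * Real.exp (-(r ^ 2 * ‖y‖ ^ 2) / 2) := by
    intro r; fun_prop
  have hcont' : ∀ r : ℝ, Continuous fun y : EuclideanSpace ℝ (Fin n) =>
      ((n : ℝ) * r ^ (n - 1) - r ^ (n + 1) * ‖y‖ ^ 2)
        * Real.exp (-(r ^ 2 * ‖y‖ ^ 2) / 2) := by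
    intro r; fun_prop
  set bound : EuclideanSpace ℝ (Fin n) → ℝ := fun y =>
    (n : ℝ) * 2 ^ n * Real.exp (-(1 / 8 * ‖y‖ ^ 2))
      + 2 ^ (n + 1) * (‖y‖ ^ 2 * Real.exp (-(1 / 8 * ‖y‖ ^ 2))) with hbound
  have bound_int : Integrable bound := by
    exact ((intExp n (by norm_num : (0:ℝ) < 1/8)).const_mul _).add
      ((intSqExp n (by norm_num : (0:ℝ) < 1/8)).const_mul _)
  -- the derivative statement
  have main := hasDerivAt_integral_of_dominated_loc_of_deriv_le
    (F := fun r => PhiF n G r) (F' := fun r => PhiF' n G r) (x₀ := (1:ℝ))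
    (bound := bound) (s := Metric.ball 1 (1/2)) (Metric.ball_mem_nhds _ (by norm_num))
    (Filter.Eventually.of_forall fun r =>
      ((hcont r).stronglyMeasurable.indicator hGm).aestronglyMeasurable)
    ?hint
    (((hcont' 1).stronglyMeasurable.indicator hGm).aestronglyMeasurable)
    ?hbd bound_int
    (Filter.Eventually.of_forall fun y r _ => PhiF_hasDeriv n G r y)
  case hint =>
    refine ((intExp n (by norm_num : (0:ℝ) < 1/2)).mono'
      (((hcont 1).stronglyMeasurable.indicator hGm).aestronglyMeasurable)
      (Filter.Eventually.of_forall fun y => ?_))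
    by_cases hy : y ∈ G
    · simp only [PhiF, Set.indicator_of_mem hy, Real.norm_eq_abs, one_pow, one_mul,
        abs_of_nonneg (Real.exp_nonneg _)]
      apply le_of_eq; congr 1; ring
    · simp only [PhiF, Set.indicator_of_notMem hy, norm_zero]
      positivity
  case hbd =>
    refine Filter.Eventually.of_forall fun y r hr => ?_
    have hq : (0:ℝ) ≤ ‖y‖ ^ 2 := by positivity
    have hr1 : |r - 1| < 1/2 := by simpa [Real.dist_eq] using hr
    have hrlo : 1/2 < r := by cases abs_lt.mp hr1; linarith
    have hrhi : r < 3/2 := by cases abs_lt.mp hr1; linarith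
    have hr0 : (0:ℝ) ≤ r := by linarith
    by_cases hy : y ∈ G
    · simp only [PhiF', Set.indicator_of_mem hy, Real.norm_eq_abs]
      have hexp : Real.exp (-(r ^ 2 * ‖y‖ ^ 2) / 2) ≤ Real.exp (-(1 / 8 * ‖y‖ ^ 2)) := by
        apply Real.exp_le_exp.mpr
        nlinarith [mul_le_mul_of_nonneg_right (by nlinarith : (1:ℝ)/4 ≤ r ^ 2) hq]
      have hA : (n : ℝ) * r ^ (n - 1) ≤ (n : ℝ) * 2 ^ n := by
        have : r ^ (n - 1) ≤ 2 ^ (n - 1) :=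
          pow_le_pow_left₀ hr0 (by linarith) _
        have h2 : (2:ℝ) ^ (n - 1) ≤ 2 ^ n :=
          pow_le_pow_right₀ (by norm_num) (Nat.sub_le n 1)
        have := this.trans h2
        exact mul_le_mul_of_nonneg_left this (Nat.cast_nonneg n)
      have hB : r ^ (n + 1) * ‖y‖ ^ 2 ≤ 2 ^ (n + 1) * ‖y‖ ^ 2 := by
        apply mul_le_mul_of_nonneg_right _ hq
        exact pow_le_pow_left₀ hr0 (by linarith) _
      have habs : |((n : ℝ) * r ^ (n - 1) - r ^ (n + 1) * ‖y‖ ^ 2)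
          * Real.exp (-(r ^ 2 * ‖y‖ ^ 2) / 2)|
          ≤ ((n : ℝ) * r ^ (n - 1) + r ^ (n + 1) * ‖y‖ ^ 2)
            * Real.exp (-(r ^ 2 * ‖y‖ ^ 2) / 2) := by
        rw [abs_mul, abs_of_nonneg (Real.exp_nonneg _)]
        apply mul_le_mul_of_nonneg_right _ (Real.exp_nonneg _)
        have h1 : (0:ℝ) ≤ (n : ℝ) * r ^ (n - 1) := by positivity
        have h2 : (0:ℝ) ≤ r ^ (n + 1) * ‖y‖ ^ 2 := by positivity
        rw [abs_le]; constructor <;> nlinarith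
      calc |((n : ℝ) * r ^ (n - 1) - r ^ (n + 1) * ‖y‖ ^ 2)
          * Real.exp (-(r ^ 2 * ‖y‖ ^ 2) / 2)|
          ≤ ((n : ℝ) * r ^ (n - 1) + r ^ (n + 1) * ‖y‖ ^ 2)
            * Real.exp (-(r ^ 2 * ‖y‖ ^ 2) / 2) := habs
        _ ≤ ((n : ℝ) * 2 ^ n + 2 ^ (n + 1) * ‖y‖ ^ 2)
            * Real.exp (-(1 / 8 * ‖y‖ ^ 2)) := by
            apply mul_le_mul (by linarith) hexp (Real.exp_nonneg _) (by positivity)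
        _ = bound y := by rw [hbound]; ring
    · simp only [PhiF', Set.indicator_of_notMem hy, norm_zero, hbound]
      positivity
  obtain ⟨hint', hD⟩ := main
  -- monotonicity of F on (1, ∞)
  have hFeq : ∀ r : ℝ, 0 < r → (∫ y, PhiF n G r y) =
      ∫ v, ((fun v => r⁻¹ • v) ⁻¹' G).indicator
        (fun v => Real.exp (-‖v‖ ^ 2 / 2)) v := by
    intro r hr
    have hrne : r ≠ 0 := ne_of_gt hr
    have key : ∀ y, ((fun v => r⁻¹ • v) ⁻¹' G).indicator
        (fun v => Real.exp (-‖v‖ ^ 2 / 2)) (r • y)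
        = G.indicator (fun y => Real.exp (-(r ^ 2 * ‖y‖ ^ 2) / 2)) y := by
      intro y
      have hmem : (r • y ∈ (fun v => r⁻¹ • v) ⁻¹' G) ↔ y ∈ G := by
        simp [Set.mem_preimage, smul_smul, inv_mul_cancel₀ hrne]
      have hnrm : ‖r • y‖ ^ 2 = r ^ 2 * ‖y‖ ^ 2 := by
        rw [norm_smul, mul_pow, Real.norm_eq_abs, sq_abs]
      by_cases hy : y ∈ G
      · rw [Set.indicator_of_mem (hmem.mpr hy), Set.indicator_of_mem hy, hnrm, neg_div]
      · rw [Set.indicator_of_notMem (fun h => hy (hmem.mp h)),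
          Set.indicator_of_notMem hy]
    have comp := MeasureTheory.Measure.integral_comp_smul_of_nonneg
      (μ := volume) (f := fun v => ((fun v => r⁻¹ • v) ⁻¹' G).indicator
        (fun v => Real.exp (-‖v‖ ^ 2 / 2)) v) (R := r) (hR := hr.le)
    have h1 : (∫ y, PhiF n G r y) = r ^ n *
        ∫ y, G.indicator (fun y => Real.exp (-(r ^ 2 * ‖y‖ ^ 2) / 2)) y := by
      rw [← integral_const_mul]
      congr 1; funext y
      by_cases hy : y ∈ G <;>
        simp [PhiF, Set.indicator_of_mem, Set.indicator_of_notMem, hy]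
    rw [h1]
    conv_lhs => rw [show (fun y : EuclideanSpace ℝ (Fin n) =>
      G.indicator (fun y => Real.exp (-(r ^ 2 * ‖y‖ ^ 2) / 2)) y)
      = fun y => ((fun v => r⁻¹ • v) ⁻¹' G).indicator
        (fun v => Real.exp (-‖v‖ ^ 2 / 2)) (r • y) from funext fun y => (key y).symm]
    rw [comp, finrank_euclideanSpace_fin, smul_eq_mul, ← mul_assoc,
      mul_inv_cancel₀ (pow_ne_zero _ hrne), one_mul]
  have hmono : ∀ r : ℝ, 1 < r → (∫ y, PhiF n G 1 y) ≤ ∫ y, PhiF n G r y := by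
    intro r hr
    have hr0 : (0:ℝ) < r := by linarith
    rw [hFeq r hr0, hFeq 1 one_pos]
    have hSm : MeasurableSet ((fun v : EuclideanSpace ℝ (Fin n) => r⁻¹ • v) ⁻¹' G) :=
      hGm.preimage (measurable_const_smul r⁻¹)
    have hS1 : MeasurableSet ((fun v : EuclideanSpace ℝ (Fin n) => (1:ℝ)⁻¹ • v) ⁻¹' G) :=
      hGm.preimage (measurable_const_smul _)
    apply integral_mono
    · refine (intExp n (by norm_num : (0:ℝ) < 1/2)).mono'
        ((Real.continuous_exp.comp
          ((continuous_norm.pow 2).neg.div_const 2)).stronglyMeasurable.indicator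
            hS1).aestronglyMeasurable
        (Filter.Eventually.of_forall fun y => ?_)
      refine (norm_indicator_le_norm_self _ _).trans ?_
      rw [Real.norm_eq_abs, abs_of_nonneg (Real.exp_nonneg _)]
      apply le_of_eq; congr 1; ring
    · refine (intExp n (by norm_num : (0:ℝ) < 1/2)).mono'
        ((Real.continuous_exp.comp
          ((continuous_norm.pow 2).neg.div_const 2)).stronglyMeasurable.indicator
            hSm).aestronglyMeasurable
        (Filter.Eventually.of_forall fun y => ?_)
      refine (norm_indicator_le_norm_self _ _).trans ?_
      rw [Real.norm_eq_abs, abs_of_nonneg (Real.exp_nonneg _)]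
      apply le_of_eq; congr 1; ring
    · intro v
      by_cases hv : v ∈ (fun v : EuclideanSpace ℝ (Fin n) => (1:ℝ)⁻¹ • v) ⁻¹' G
      · have hvG : v ∈ G := by simpa using hv
        have : r⁻¹ • v ∈ G := hstar v hvG r⁻¹ (by positivity) (by
          rw [inv_le_one_iff₀]; right; linarith)
        rw [Set.indicator_of_mem hv, Set.indicator_of_mem (Set.mem_preimage.mpr this)]
      · rw [Set.indicator_of_notMem hv]
        exact Set.indicator_nonneg (fun _ _ => Real.exp_nonneg _) _
  -- derivative at 1 is nonnegative
  have hD0 : 0 ≤ ∫ y, PhiF' n G 1 y := by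
    have hs := hasDerivAt_iff_tendsto_slope.mp hD
    have hs' : Tendsto (slope (fun r => ∫ y, PhiF n G r y) 1) (nhdsWithin 1 (Set.Ioi 1))
        (nhds (∫ y, PhiF' n G 1 y)) :=
      hs.mono_left (nhdsWithin_mono 1 (fun x hx => ne_of_gt hx))
    refine ge_of_tendsto hs' ?_
    filter_upwards [self_mem_nhdsWithin] with r hr
    rw [slope_def_field]
    apply div_nonneg _ (by simp at hr; linarith)
    have := hmono r hr
    linarith
  refine hD0.trans (le_of_eq ?_)
  congr 1; funext y
  by_cases hy : y ∈ G
  · simp only [PhiF', Set.indicator_of_mem hy, one_pow, one_mul, mul_one]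
  · simp [PhiF', Set.indicator_of_notMem hy]

set_option maxHeartbeats 1000000 in
theorem lemma4_iv (n : ℕ) (hn : 2 ≤ n) (ρ : ℝ) (hρ : ρ ∈ Set.Ioo (0 : ℝ) 1)
    (C : Fin 3 → Set (EuclideanSpace ℝ (Fin 2)))
    (hC : IsSimplicialConicalPartition 2 3 C)
    (B : Fin 3 → Set (EuclideanSpace ℝ (Fin n)))
    (hB : ∀ p, B p = proj2 n hn ⁻¹' C p)
    (i j : Fin 3) (hij : i ≠ j)
    (hBij : B i ∩ B j ⊆ {x | x (Fin.castLE hn 0) = 0})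
    (hBi : B i ⊆ {x | 0 ≤ x (Fin.castLE hn 0)})
    (hrefl : B j = reflFirst n hn '' B i) :
    ∀ x ∈ B i, Real.sqrt n * Real.sqrt (1 - ρ ^ 2) / ρ < x (Fin.castLE hn 0) →
      0 ≤ ∫ y, (∑ ℓ, (1 - (y ℓ) ^ 2)) *
          ((B i).indicator 1 (ρ • x + Real.sqrt (1 - ρ ^ 2) • y)
            - (B j).indicator 1 (ρ • x + Real.sqrt (1 - ρ ^ 2) • y)) ∂(gauss n) := by
  classical
  intro x hx hx1
  obtain ⟨w, hw0, hwC⟩ := hC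
  have hρ0 : 0 < ρ := hρ.1
  have hρ1 : ρ < 1 := hρ.2
  set s : ℝ := Real.sqrt (1 - ρ ^ 2) with hs
  have hs0 : 0 < s := Real.sqrt_pos.mpr (by nlinarith)
  set k : Fin n := Fin.castLE hn 0 with hk
  set z : EuclideanSpace ℝ (Fin n) → EuclideanSpace ℝ (Fin n) :=
    fun y => ρ • x + s • y with hzdef
  set G : Set (EuclideanSpace ℝ (Fin n)) := z ⁻¹' (B i) with hGdef
  set H : Set (EuclideanSpace ℝ (Fin n)) := z ⁻¹' (B j) with hHdef
  have happly : ∀ (y : EuclideanSpace ℝ (Fin n)) (ℓ : Fin n),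
      z y ℓ = ρ * x ℓ + s * y ℓ := by
    intro y ℓ
    simp [hzdef, PiLp.add_apply, PiLp.smul_apply, smul_eq_mul]
  have hq : ∀ y : EuclideanSpace ℝ (Fin n), ‖y‖ ^ 2 = ∑ ℓ, (y ℓ) ^ 2 := by
    intro y
    rw [EuclideanSpace.norm_eq,
      Real.sq_sqrt (Finset.sum_nonneg fun ℓ _ => by positivity)]
    simp [Real.norm_eq_abs, sq_abs]
  have hsum : ∀ y : EuclideanSpace ℝ (Fin n),
      (∑ ℓ, (1 - (y ℓ) ^ 2)) = (n : ℝ) - ‖y‖ ^ 2 := by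
    intro y
    rw [hq y, Finset.sum_sub_distrib, Finset.sum_const, Finset.card_univ, Fintype.card_fin]
    simp
  -- inequalities satisfied by x
  have hxB : ∀ p, (inner ℝ (proj2 n hn x) (w p) : ℝ) ≤ inner ℝ (proj2 n hn x) (w i) := by
    have := hx; rw [hB i, Set.mem_preimage, hwC i] at this; exact this
  have hGmem : ∀ y, y ∈ G ↔ ∀ p, (inner ℝ (proj2 n hn (z y)) (w p) : ℝ)
      ≤ inner ℝ (proj2 n hn (z y)) (w i) := by
    intro y
    rw [hGdef, Set.mem_preimage, hB i, Set.mem_preimage, hwC i]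
    rfl
  have hproj2 : ∀ (a b : ℝ) (u v : EuclideanSpace ℝ (Fin n)),
      proj2 n hn (a • u + b • v) = a • proj2 n hn u + b • proj2 n hn v := by
    intro a b u v
    ext ℓ
    simp [proj2, PiLp.add_apply, PiLp.smul_apply, smul_eq_mul]
  have hinner : ∀ (y : EuclideanSpace ℝ (Fin n)) (p : Fin 3),
      (inner ℝ (proj2 n hn (z y)) (w p) : ℝ)
        = ρ * inner ℝ (proj2 n hn x) (w p) + s * inner ℝ (proj2 n hn y) (w p) := by
    intro y p
    rw [hzdef]
    show (inner ℝ (proj2 n hn (ρ • x + s • y)) (w p) : ℝ) = _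
    rw [hproj2, inner_add_left, real_inner_smul_left, real_inner_smul_left]
  have hstar : ∀ y ∈ G, ∀ r : ℝ, 0 ≤ r → r ≤ 1 → r • y ∈ G := by
    intro y hy r hr0 hr1
    rw [hGmem] at hy ⊢
    intro p
    have h1 := hxB p
    have h2 := hy p
    rw [hinner y p, hinner y i] at h2
    rw [hinner (r • y) p, hinner (r • y) i]
    have hpy : ∀ p : Fin 3, (inner ℝ (proj2 n hn (r • y)) (w p) : ℝ)
        = r * inner ℝ (proj2 n hn y) (w p) := by
      intro p
      have hpr : proj2 n hn (r • y) = r • proj2 n hn y := by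
        ext ℓ; simp [proj2, PiLp.smul_apply, smul_eq_mul]
      rw [hpr, real_inner_smul_left]
    rw [hpy p, hpy i]
    nlinarith [mul_le_mul_of_nonneg_left h2 hr0,
      mul_le_mul_of_nonneg_left h1 (mul_nonneg (sub_nonneg.mpr hr1) hρ0.le)]
  -- measurability
  have hprojCont : Continuous (proj2 n hn) := by
    have h1 : Continuous fun (v : EuclideanSpace ℝ (Fin n)) (ℓ : Fin 2) =>
        v (Fin.castLE hn ℓ) :=
      continuous_pi fun ℓ => (EuclideanSpace.proj (𝕜 := ℝ) (Fin.castLE hn ℓ)).continuous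
    exact (PiLp.continuous_toLp (p := 2) (β := fun _ : Fin 2 => ℝ)).comp h1
  have hCm : ∀ p, MeasurableSet (C p) := by
    intro p
    rw [hwC p]
    have hcl : IsClosed {v : EuclideanSpace ℝ (Fin 2) |
        ∀ q, (inner ℝ v (w q) : ℝ) ≤ inner ℝ v (w p)} := by
      have heq : {v : EuclideanSpace ℝ (Fin 2) | ∀ q, (inner ℝ v (w q) : ℝ) ≤ inner ℝ v (w p)}
          = ⋂ q, {v | (inner ℝ v (w q) : ℝ) ≤ inner ℝ v (w p)} := by ext v; simp
      rw [heq]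
      exact isClosed_iInter fun q => isClosed_le
        (continuous_id.inner continuous_const) (continuous_id.inner continuous_const)
    exact hcl.measurableSet
  have hzc : Continuous z := continuous_const.add (continuous_id.const_smul s)
  have hBim : MeasurableSet (B i) := by
    rw [hB i]; exact hprojCont.measurable (hCm i)
  have hBjm : MeasurableSet (B j) := by
    rw [hB j]; exact hprojCont.measurable (hCm j)
  have hGm : MeasurableSet G := hzc.measurable hBim
  have hHm : MeasurableSet H := hzc.measurable hBjm
  -- negativity on H
  have hHneg : ∀ y ∈ H, (n : ℝ) - ‖y‖ ^ 2 ≤ 0 := by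
    intro y hy
    have hzj : z y ∈ B j := hy
    rw [hrefl] at hzj
    obtain ⟨u, hu, huz⟩ := hzj
    have h1 : z y k = -(u k) := by
      rw [← huz, hk]; simp [reflFirst]
    have h2 : (0:ℝ) ≤ u k := hBi hu
    have h3 : ρ * x k + s * y k ≤ 0 := by rw [← happly y k]; rw [h1]; linarith
    have h4 : Real.sqrt n * s < ρ * x k := by
      rw [div_lt_iff₀ hρ0] at hx1
      nlinarith [hx1]
    have h5 : y k < -Real.sqrt n := by
      by_contra hcon
      push_neg at hcon
      nlinarith [mul_le_mul_of_nonneg_left hcon hs0.le]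
    have h6 : (n : ℝ) < (y k) ^ 2 := by
      have hnn : (0:ℝ) ≤ Real.sqrt n := Real.sqrt_nonneg _
      nlinarith [Real.sq_sqrt (show (0:ℝ) ≤ (n:ℝ) by positivity)]
    have h7 : (y k) ^ 2 ≤ ‖y‖ ^ 2 := by
      rw [hq y]
      exact Finset.single_le_sum (f := fun ℓ => (y ℓ) ^ 2) (fun ℓ _ => by positivity) (Finset.mem_univ k)
    linarith
  -- density setup
  set c : ℝ := (2 * Real.pi) ^ (-(n : ℝ) / 2) with hc
  have hc0 : 0 < c := Real.rpow_pos_of_pos (by positivity) _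
  set d := fun y : EuclideanSpace ℝ (Fin n) => c * Real.exp (-‖y‖ ^ 2 / 2) with hd
  have hd0 : ∀ y, 0 ≤ d y := fun y => by rw [hd]; positivity
  have hdc : Continuous d := by rw [hd]; fun_prop
  have hdm : Measurable fun y => (d y).toNNReal := hdc.measurable.real_toNNReal
  have hgauss : gauss n = volume.withDensity fun y => (((d y).toNNReal : ℝ≥0) : ℝ≥0∞) := by
    rw [hd, hc]
    unfold gauss
    rfl
  rw [hgauss, integral_withDensity_eq_integral_smul hdm]
  -- rewrite the integrand
  have hpt : (fun y => (d y).toNNReal • ((∑ ℓ, (1 - (y ℓ) ^ 2)) *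
      ((B i).indicator 1 (ρ • x + s • y) - (B j).indicator 1 (ρ • x + s • y))))
      = fun y => G.indicator (fun y => d y * ((n : ℝ) - ‖y‖ ^ 2)) y
        - H.indicator (fun y => d y * ((n : ℝ) - ‖y‖ ^ 2)) y := by
    funext y
    rw [NNReal.smul_def, smul_eq_mul, Real.coe_toNNReal _ (hd0 y), hsum y]
    have hzy : ρ • x + s • y = z y := rfl
    rw [hzy]
    by_cases h1 : y ∈ G <;> by_cases h2 : y ∈ H
    · rw [Set.indicator_of_mem h1, Set.indicator_of_mem h2,
        Set.indicator_of_mem (show z y ∈ B i from h1),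
        Set.indicator_of_mem (show z y ∈ B j from h2)]
      simp
    · rw [Set.indicator_of_mem h1, Set.indicator_of_notMem h2,
        Set.indicator_of_mem (show z y ∈ B i from h1),
        Set.indicator_of_notMem (show z y ∉ B j from h2)]
      simp only [Pi.one_apply, sub_zero, mul_one]
    · rw [Set.indicator_of_notMem h1, Set.indicator_of_mem h2,
        Set.indicator_of_notMem (show z y ∉ B i from h1),
        Set.indicator_of_mem (show z y ∈ B j from h2)]
      simp only [Pi.one_apply, zero_sub, mul_neg, mul_one, zero_sub]
    · rw [Set.indicator_of_notMem h1, Set.indicator_of_notMem h2,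
        Set.indicator_of_notMem (show z y ∉ B i from h1),
        Set.indicator_of_notMem (show z y ∉ B j from h2)]
      simp
  rw [hpt]
  -- integrability
  have hint : ∀ (S : Set (EuclideanSpace ℝ (Fin n))), MeasurableSet S →
      Integrable (fun y => S.indicator (fun y => d y * ((n : ℝ) - ‖y‖ ^ 2)) y) := by
    intro S hS
    have hdom : Integrable (fun y : EuclideanSpace ℝ (Fin n) =>
        c * ((n : ℝ) * Real.exp (-(1/2 * ‖y‖ ^ 2)) + ‖y‖ ^ 2 * Real.exp (-(1/2 * ‖y‖ ^ 2)))) :=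
      (((intExp n (by norm_num)).const_mul _).add (intSqExp n (by norm_num))).const_mul c
    have hgc : Continuous fun y : EuclideanSpace ℝ (Fin n) => (n : ℝ) - ‖y‖ ^ 2 :=
      continuous_const.sub (continuous_norm.pow 2)
    refine hdom.mono' ?_ (Filter.Eventually.of_forall fun y => ?_)
    · exact ((hdc.mul hgc).stronglyMeasurable.indicator hS).aestronglyMeasurable
    · refine (norm_indicator_le_norm_self _ _).trans ?_
      rw [Real.norm_eq_abs, abs_mul, abs_of_nonneg (hd0 y)]
      have he : Real.exp (-‖y‖ ^ 2 / 2) = Real.exp (-(1/2 * ‖y‖ ^ 2)) := by ring_nf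
      have hdy : d y = c * Real.exp (-‖y‖ ^ 2 / 2) := rfl
      rw [hdy]
      have habs : |(n : ℝ) - ‖y‖ ^ 2| ≤ (n : ℝ) + ‖y‖ ^ 2 := by
        rw [abs_le]
        constructor <;> nlinarith [sq_nonneg ‖y‖, Nat.cast_nonneg (α := ℝ) n]
      rw [he]
      calc c * Real.exp (-(1/2 * ‖y‖ ^ 2)) * |(n : ℝ) - ‖y‖ ^ 2|
          ≤ c * Real.exp (-(1/2 * ‖y‖ ^ 2)) * ((n : ℝ) + ‖y‖ ^ 2) :=
            mul_le_mul_of_nonneg_left habs (by positivity)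
        _ = c * ((n : ℝ) * Real.exp (-(1/2 * ‖y‖ ^ 2))
            + ‖y‖ ^ 2 * Real.exp (-(1/2 * ‖y‖ ^ 2))) := by ring
  rw [integral_sub (hint G hGm) (hint H hHm)]
  have hT2 : ∫ y, H.indicator (fun y => d y * ((n : ℝ) - ‖y‖ ^ 2)) y ≤ 0 := by
    apply integral_nonpos
    intro y
    simp only [Pi.zero_apply]
    by_cases h : y ∈ H
    · rw [Set.indicator_of_mem h]
      exact mul_nonpos_iff.mpr (Or.inl ⟨hd0 y, hHneg y h⟩)
    · rw [Set.indicator_of_notMem h]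
  have hT1 : 0 ≤ ∫ y, G.indicator (fun y => d y * ((n : ℝ) - ‖y‖ ^ 2)) y := by
    have hkey := keyStar n G hGm hstar
    have heq : (fun y => G.indicator (fun y => d y * ((n : ℝ) - ‖y‖ ^ 2)) y)
        = fun y => c * G.indicator
          (fun y => ((n : ℝ) - ‖y‖ ^ 2) * Real.exp (-‖y‖ ^ 2 / 2)) y := by
      funext y
      by_cases h : y ∈ G
      · rw [Set.indicator_of_mem h, Set.indicator_of_mem h, hd]; ring
      · rw [Set.indicator_of_notMem h, Set.indicator_of_notMem h, mul_zero]
    rw [heq, integral_const_mul]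
    exact mul_nonneg hc0.le hkey
  linarith
end

section
/- For every multi-index ℓ = (ℓ_1,…,ℓ_n) ∈ ℕⁿ with |ℓ| ≥ 1 and every x = (x_1,…,x_n) ∈ ℝⁿ, |h_ℓ(x)| √(ℓ!) ≤ |ℓ|^n 3^{|ℓ|} ∏_{i=1}^n max{1, |x_i|^{ℓ_i}}. -/
open MeasureTheory
open scoped Nat

noncomputable def hermiteh (ℓ : ℕ) (x : ℝ) : ℝ :=
  (Polynomial.aeval x (Polynomial.hermite ℓ)) / (Nat.factorial ℓ)

lemma coeff_abs_le (n k : ℕ) :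
    |(Polynomial.hermite n).coeff k| ≤ ((n - k - 1)‼ * Nat.choose n k : ℤ) := by
  rw [Polynomial.coeff_hermite]
  split_ifs with h
  · rw [abs_mul, abs_mul, abs_pow, abs_neg, abs_one, one_pow, one_mul]
    simp
  · positivity

lemma dfac_mono : ∀ m : ℕ, m‼ ≤ (m + 1)‼
  | 0 => by simp [Nat.doubleFactorial]
  | 1 => by simp [Nat.doubleFactorial]
  | (m + 2) => by
    rw [Nat.doubleFactorial_add_two, show m + 2 + 1 = m + 1 + 2 from rfl,
      Nat.doubleFactorial_add_two]
    exact Nat.mul_le_mul (by omega) (dfac_mono m)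

lemma dfac_sq_le (m : ℕ) : (m‼) ^ 2 ≤ (m + 1)! := by
  rw [pow_two, Nat.factorial_eq_mul_doubleFactorial]
  exact Nat.mul_le_mul_right _ (dfac_mono m)

lemma dfac_le_sqrt (n k : ℕ) :
    ((n - k - 1)‼ : ℝ) ≤ Real.sqrt (n !) := by
  rw [show ((n ! : ℝ)) = ((n ! : ℕ) : ℝ) from rfl]
  rw [Real.le_sqrt' (by positivity)]
  have h1 : ((n - k - 1)‼) ^ 2 ≤ (n - k - 1 + 1)! := dfac_sq_le _
  have h2 : (n - k - 1 + 1)! ≤ n ! := by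
    rcases Nat.eq_zero_or_pos n with rfl | hn
    · simp
    · exact Nat.factorial_le (by omega)
  exact_mod_cast h1.trans h2

lemma aeval_hermite_abs_le (n : ℕ) (x : ℝ) :
    |(Polynomial.aeval x (Polynomial.hermite n) : ℝ)|
      ≤ 2 ^ n * Real.sqrt (Nat.factorial n) * max 1 (|x| ^ n) := by
  rw [Polynomial.aeval_eq_sum_range (R := ℤ) x, Polynomial.natDegree_hermite]
  have h1 : |∑ k ∈ Finset.range (n + 1), (Polynomial.hermite n).coeff k • x ^ k|
      ≤ ∑ k ∈ Finset.range (n + 1),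
        (((n - k - 1)‼ * Nat.choose n k : ℕ) : ℝ) * max 1 (|x| ^ n) := by
    refine (Finset.abs_sum_le_sum_abs _ _).trans (Finset.sum_le_sum fun k hk => ?_)
    rw [zsmul_eq_mul, abs_mul, abs_pow]
    have hx : |x| ^ k ≤ max 1 (|x| ^ n) := by
      rcases le_total (|x|) 1 with h | h
      · exact le_max_of_le_left (pow_le_one₀ (abs_nonneg x) h)
      · exact le_max_of_le_right (pow_le_pow_right₀ h
          (Finset.mem_range_succ_iff.mp hk))
    have hc : |((Polynomial.hermite n).coeff k : ℝ)|
        ≤ (((n - k - 1)‼ * Nat.choose n k : ℕ) : ℝ) := by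
      have := coeff_abs_le n k
      rw [← Int.cast_abs]
      exact_mod_cast this
    exact mul_le_mul hc hx (by positivity) (by positivity)
  refine h1.trans ?_
  have h2 : ∀ k ∈ Finset.range (n + 1),
      (((n - k - 1)‼ * Nat.choose n k : ℕ) : ℝ) * max 1 (|x| ^ n)
      ≤ Real.sqrt (Nat.factorial n) * (Nat.choose n k : ℝ) * max 1 (|x| ^ n) := by
    intro k _
    have hd := dfac_le_sqrt n k
    push_cast
    gcongr
  refine (Finset.sum_le_sum h2).trans ?_
  have h3 : ∑ k ∈ Finset.range (n + 1),
      Real.sqrt (Nat.factorial n) * (Nat.choose n k : ℝ) * max 1 (|x| ^ n)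
      = Real.sqrt (Nat.factorial n) * (2 ^ n : ℝ) * max 1 (|x| ^ n) := by
    rw [← Finset.sum_mul, ← Finset.mul_sum, ← Nat.cast_sum, Nat.sum_range_choose]
    push_cast
    ring
  rw [h3]
  exact le_of_eq (by ring)

lemma hermiteh_bound_one (n : ℕ) (x : ℝ) :
    |hermiteh n x| * Real.sqrt (Nat.factorial n) ≤ 3 ^ n * max 1 (|x| ^ n) := by
  have hf : (0 : ℝ) < (Nat.factorial n : ℝ) := by positivity
  have hs : Real.sqrt (Nat.factorial n) * Real.sqrt (Nat.factorial n)
      = (Nat.factorial n : ℝ) := Real.mul_self_sqrt hf.le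
  rw [hermiteh, abs_div, abs_of_pos hf, div_mul_eq_mul_div, div_le_iff₀ hf]
  calc |(Polynomial.aeval x (Polynomial.hermite n) : ℝ)| * Real.sqrt (Nat.factorial n)
      ≤ (2 ^ n * Real.sqrt (Nat.factorial n) * max 1 (|x| ^ n)) *
          Real.sqrt (Nat.factorial n) :=
        mul_le_mul_of_nonneg_right (aeval_hermite_abs_le n x) (Real.sqrt_nonneg _)
    _ = 2 ^ n * max 1 (|x| ^ n) *
          (Real.sqrt (Nat.factorial n) * Real.sqrt (Nat.factorial n)) := by ring
    _ = 2 ^ n * max 1 (|x| ^ n) * (Nat.factorial n : ℝ) := by rw [hs]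
    _ ≤ 3 ^ n * max 1 (|x| ^ n) * (Nat.factorial n : ℝ) := by
        have h23 : (2 : ℝ) ^ n ≤ 3 ^ n := by
          apply pow_le_pow_left₀ <;> norm_num
        have hm : (0 : ℝ) ≤ max 1 (|x| ^ n) := by positivity
        nlinarith [hf.le, mul_le_mul_of_nonneg_right h23 hm]

theorem hermite_bound (n : ℕ) (ℓ : Fin n → ℕ) (hl : 1 ≤ ∑ i, ℓ i)
    (x : EuclideanSpace ℝ (Fin n)) :
    |∏ i, hermiteh (ℓ i) (x i)| * Real.sqrt (∏ i, (Nat.factorial (ℓ i) : ℝ))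
      ≤ ((∑ i, ℓ i : ℕ) : ℝ) ^ n * 3 ^ (∑ i, ℓ i) *
        ∏ i, max 1 (|x i| ^ (ℓ i)) := by
  have hsqrt : Real.sqrt (∏ i, (Nat.factorial (ℓ i) : ℝ))
      = ∏ i, Real.sqrt (Nat.factorial (ℓ i)) := by
    induction (Finset.univ : Finset (Fin n)) using Finset.induction_on with
    | empty => simp
    | insert a s h ih =>
      rw [Finset.prod_insert h, Finset.prod_insert h, ← ih,
        Real.sqrt_mul (by positivity)]
  rw [hsqrt, Finset.abs_prod, ← Finset.prod_mul_distrib]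
  have h1 : (1 : ℝ) ≤ ((∑ i, ℓ i : ℕ) : ℝ) ^ n := one_le_pow₀ (by exact_mod_cast hl)
  have h2 : (0 : ℝ) ≤ 3 ^ (∑ i, ℓ i) * ∏ i, max 1 (|x i| ^ (ℓ i)) := by positivity
  calc ∏ i, (|hermiteh (ℓ i) (x i)| * Real.sqrt (Nat.factorial (ℓ i)))
      ≤ ∏ i, ((3 : ℝ) ^ (ℓ i) * max 1 (|x i| ^ (ℓ i))) :=
        Finset.prod_le_prod (fun i _ => by positivity)
          (fun i _ => hermiteh_bound_one (ℓ i) (x i))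
    _ = 3 ^ (∑ i, ℓ i) * ∏ i, max 1 (|x i| ^ (ℓ i)) := by
        rw [Finset.prod_mul_distrib, Finset.prod_pow_eq_pow_sum]
    _ = 1 * (3 ^ (∑ i, ℓ i) * ∏ i, max 1 (|x i| ^ (ℓ i))) := by ring
    _ ≤ ((∑ i, ℓ i : ℕ) : ℝ) ^ n * (3 ^ (∑ i, ℓ i) * ∏ i, max 1 (|x i| ^ (ℓ i))) :=
        mul_le_mul_of_nonneg_right h1 h2
    _ = ((∑ i, ℓ i : ℕ) : ℝ) ^ n * 3 ^ (∑ i, ℓ i) * ∏ i, max 1 (|x i| ^ (ℓ i)) := by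
        ring
end

section
/- Let η > 0, t > 0 and n ≥ 2. Then ∫_{[-η,η] × [t,∞) × ℝ^{n-2}} Σ_{ℓ ∈ ℕⁿ, 0 ≤ |ℓ| ≤ 3} ∏_{i=1}^n |y_i|^{ℓ_i} dγ_n(y) ≤ 3000 n³ η (t² + 2) e^{-t²/2}. -/
open MeasureTheory

/-- The finite set of multi-indices `ℓ ∈ ℕⁿ` with `|ℓ| = Σᵢ ℓᵢ ≤ 3`. -/
def multiIdx3 (n : ℕ) : Finset (Fin n → ℕ) :=
  Finset.filter (fun ℓ => ∑ i, ℓ i ≤ 3) (Finset.Iic fun _ => 3)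

set_option maxHeartbeats 1000000
set_option linter.unreachableTactic false
set_option linter.unusedTactic false

open Real Set Filter Finset
open scoped ENNReal NNReal


lemma pow_le_six_mul_exp {k : ℕ} (hk : k ≤ 3) {y : ℝ} (hy : 0 ≤ y) : y ^ k ≤ 6 * Real.exp y := by
  have h := Real.sum_le_exp_of_nonneg hy (k + 1)
  have h2 : y ^ k / (Nat.factorial k : ℝ) ≤ Real.exp y :=
    le_trans (Finset.single_le_sum (f := fun i => y ^ i / (Nat.factorial i : ℝ))
      (fun i _ => by positivity) (Finset.self_mem_range_succ k)) h
  have hfac : (Nat.factorial k : ℝ) ≤ 6 := by interval_cases k <;> norm_num [Nat.factorial]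
  have hfacpos : (0:ℝ) < (Nat.factorial k : ℝ) := by positivity
  calc y ^ k = y ^ k / (Nat.factorial k : ℝ) * (Nat.factorial k : ℝ) := by field_simp
    _ ≤ Real.exp y * 6 := mul_le_mul h2 hfac hfacpos.le (Real.exp_pos _).le
    _ = 6 * Real.exp y := mul_comm _ _

lemma key_sq (k : ℕ) (a x : ℝ) :
    (|x| ^ k * Real.exp a) ^ 2 = (x ^ 2) ^ k * Real.exp (a + a) := by
  rw [mul_pow, sq (Real.exp a), ← Real.exp_add, ← pow_mul, mul_comm k 2, pow_mul, sq_abs]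

lemma key1 {k : ℕ} (hk : k ≤ 3) (x : ℝ) :
    |x| ^ k * Real.exp (-x ^ 2 / 2) ≤ Real.sqrt (2 * π) := by
  rw [← Real.sqrt_sq (by positivity : (0:ℝ) ≤ |x| ^ k * Real.exp (-x ^ 2 / 2))]
  apply Real.sqrt_le_sqrt
  rw [key_sq, show (-x^2/2 + -x^2/2 : ℝ) = -x^2 by ring]
  have h1 : (x ^ 2) ^ k ≤ 6 * Real.exp (x ^ 2) := pow_le_six_mul_exp hk (sq_nonneg x)
  have h2 : (x^2)^k * Real.exp (-x^2) ≤ 6 * Real.exp (x^2) * Real.exp (-x^2) :=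
    mul_le_mul_of_nonneg_right h1 (Real.exp_pos _).le
  have h3 : 6 * Real.exp (x^2) * Real.exp (-x^2) = 6 := by
    rw [mul_assoc, ← Real.exp_add]; simp
  linarith [Real.pi_gt_three]

lemma key2 {k : ℕ} (hk : k ≤ 3) (x : ℝ) :
    |x| ^ k * Real.exp (-x ^ 2 / 2) ≤ 7 * Real.exp (-(1/4) * x ^ 2) := by
  have e1 : Real.exp (-x^2/2) = Real.exp (-(1/4) * x^2) * Real.exp (-(1/4) * x^2) := by
    rw [← Real.exp_add]; ring_nf
  have h0 : |x| ^ k * Real.exp (-(1/4) * x ^ 2) ≤ 7 := by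
    rw [← Real.sqrt_sq (by positivity : (0:ℝ) ≤ |x| ^ k * Real.exp (-(1/4) * x ^ 2))]
    rw [show (7:ℝ) = Real.sqrt 49 by
      rw [show (49:ℝ) = 7^2 by norm_num, Real.sqrt_sq]; norm_num]
    apply Real.sqrt_le_sqrt
    rw [key_sq, show (-(1/4) * x^2 + -(1/4) * x^2 : ℝ) = -x^2/2 by ring]
    have h1 : (x^2)^k ≤ 48 * Real.exp (x^2/2) := by
      have hb := pow_le_six_mul_exp hk (by positivity : (0:ℝ) ≤ x^2/2)
      have h2 : (x^2)^k = 2^k * (x^2/2)^k := by rw [← mul_pow]; ring_nf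
      have h8 : (2:ℝ)^k ≤ 8 := by
        calc (2:ℝ)^k ≤ 2^3 := by apply pow_le_pow_right₀ (by norm_num) hk
          _ = 8 := by norm_num
      calc (x^2)^k = 2^k * (x^2/2)^k := h2
        _ ≤ 8 * (6 * Real.exp (x^2/2)) := by
            apply mul_le_mul h8 hb (by positivity) (by norm_num)
        _ = 48 * Real.exp (x^2/2) := by ring
    have hmul : (x^2)^k * Real.exp (-x^2/2) ≤ 48 * Real.exp (x^2/2) * Real.exp (-x^2/2) :=
      mul_le_mul_of_nonneg_right h1 (Real.exp_pos _).le
    have heq : 48 * Real.exp (x^2/2) * Real.exp (-x^2/2) = 48 := by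
      rw [mul_assoc, ← Real.exp_add, show x^2/2 + -x^2/2 = (0:ℝ) by ring, Real.exp_zero, mul_one]
    linarith
  calc |x| ^ k * Real.exp (-x ^ 2 / 2)
      = (|x| ^ k * Real.exp (-(1/4) * x ^ 2)) * Real.exp (-(1/4) * x ^ 2) := by
        rw [e1]; ring
    _ ≤ 7 * Real.exp (-(1/4) * x ^ 2) :=
        mul_le_mul_of_nonneg_right h0 (Real.exp_pos _).le

lemma integrable_abs_pow {k : ℕ} (hk : k ≤ 3) :
    Integrable (fun x : ℝ => |x| ^ k * Real.exp (-x ^ 2 / 2)) := by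
  apply Integrable.mono' ((integrable_exp_neg_mul_sq (by norm_num : (0:ℝ) < 1/4)).const_mul 7)
  · exact ((continuous_abs.pow k).mul
      ((continuous_pow 2).neg.div_const 2).rexp).aestronglyMeasurable
  · refine ae_of_all _ fun x => ?_
    rw [Real.norm_eq_abs, abs_of_nonneg (by positivity)]
    exact key2 hk x

lemma integrable_pow {k : ℕ} (hk : k ≤ 3) :
    Integrable (fun x : ℝ => x ^ k * Real.exp (-x ^ 2 / 2)) := by
  apply Integrable.mono' ((integrable_exp_neg_mul_sq (by norm_num : (0:ℝ) < 1/4)).const_mul 7)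
  · exact ((continuous_pow k).mul
      ((continuous_pow 2).neg.div_const 2).rexp).aestronglyMeasurable
  · refine ae_of_all _ fun x => ?_
    rw [Real.norm_eq_abs, abs_mul, abs_of_nonneg (Real.exp_pos _).le, abs_pow]
    exact key2 hk x

lemma tendsto_neg_sq_div : Tendsto (fun x : ℝ => -x^2/2) atTop atBot := by
  apply Tendsto.atBot_div_const (by norm_num : (0:ℝ) < 2)
  exact tendsto_neg_atBot_iff.mpr (tendsto_pow_atTop (by norm_num))

lemma tendsto_exp_neg_sq : Tendsto (fun x : ℝ => Real.exp (-x^2/2)) atTop (nhds 0) :=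
  Real.tendsto_exp_atBot.comp tendsto_neg_sq_div

lemma tail1 {a : ℝ} (ha : 0 ≤ a) :
    ∫ x in Ioi a, x * Real.exp (-x^2/2) = Real.exp (-a^2/2) := by
  have h := integral_Ioi_of_hasDerivAt_of_nonneg' (g := fun x => -Real.exp (-x^2/2))
    (g' := fun x => x * Real.exp (-x^2/2)) (a := a) (l := 0)
    (fun x _ => by
      have h1 : HasDerivAt (fun y : ℝ => -y^2/2) (-x) x := by
        have := ((hasDerivAt_pow 2 x).neg).div_const 2
        exact this.congr_deriv (by rw [show (2:ℕ)-1 = 1 from rfl]; ring)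
      have h2 := (h1.exp).neg
      exact h2.congr_deriv (by ring))
    (fun x hx => by
      have : (0:ℝ) ≤ x := le_trans ha (le_of_lt hx)
      positivity)
    (by simpa using tendsto_exp_neg_sq.neg)
  rw [h]; ring


lemma tendsto_poly_exp : Tendsto (fun x : ℝ => -((x^2+2) * Real.exp (-x^2/2))) atTop (nhds 0) := by
  rw [show (0:ℝ) = -0 by norm_num]
  apply Tendsto.neg
  have h2 : Tendsto (fun u : ℝ => (2*u+2) * Real.exp (-u)) atTop (nhds 0) := by
    have ha := tendsto_pow_mul_exp_neg_atTop_nhds_zero 1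
    have hb : Tendsto (fun u : ℝ => Real.exp (-u)) atTop (nhds 0) :=
      Real.tendsto_exp_atBot.comp (tendsto_neg_atBot_iff.mpr tendsto_id)
    have := (ha.const_mul 2).add (hb.const_mul 2)
    simp only [pow_one, mul_zero, add_zero] at this
    convert this using 2 with u
    ring
  have hsq : Tendsto (fun x : ℝ => x^2/2) atTop atTop := by
    apply Tendsto.atTop_div_const (by norm_num : (0:ℝ) < 2)
    exact tendsto_pow_atTop (by norm_num)
  have := h2.comp hsq
  convert this using 2 with x
  simp only [Function.comp]
  ring_nf

lemma tail3 {a : ℝ} (ha : 0 ≤ a) :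
    ∫ x in Ioi a, x^3 * Real.exp (-x^2/2) = (a^2+2) * Real.exp (-a^2/2) := by
  have h := integral_Ioi_of_hasDerivAt_of_nonneg' (g := fun x => -((x^2+2) * Real.exp (-x^2/2)))
    (g' := fun x => x^3 * Real.exp (-x^2/2)) (a := a) (l := 0)
    (fun x _ => by
      have h1 : HasDerivAt (fun y : ℝ => -y^2/2) (-x) x := by
        have := ((hasDerivAt_pow 2 x).neg).div_const 2
        exact this.congr_deriv (by rw [show (2:ℕ)-1 = 1 from rfl]; ring)
      have hp : HasDerivAt (fun y : ℝ => y^2+2) (2*x) x := by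
        simpa using (hasDerivAt_pow 2 x).add_const 2
      have h2 := ((hp.mul h1.exp)).neg
      exact h2.congr_deriv (by ring))
    (fun x hx => by
      have : (0:ℝ) ≤ x := le_trans ha (le_of_lt hx)
      positivity)
    tendsto_poly_exp
  rw [h]; ring

lemma gauss_total : ∫ x : ℝ, Real.exp (-x^2/2) = Real.sqrt (2*π) := by
  have h := integral_gaussian (1/2)
  simp_rw [show ∀ x:ℝ, -(1/2 : ℝ) * x^2 = -x^2/2 from fun x => by ring] at h
  rw [h]
  congr 1
  ring

lemma tail0 {a : ℝ} (ha : 0 ≤ a) :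
    ∫ x in Ioi a, Real.exp (-x^2/2) ≤ 5 * Real.exp (-a^2/2) := by
  have h0 : IntegrableOn (fun x : ℝ => Real.exp (-x^2/2)) (Ioi a) := by
    simpa using (integrable_abs_pow (k := 0) (by norm_num)).integrableOn (s := Ioi a)
  rcases le_or_gt a 1 with hle | hgt
  · have h1 : ∫ x in Ioi a, Real.exp (-x^2/2) ≤ ∫ x : ℝ, Real.exp (-x^2/2) := by
      apply setIntegral_le_integral
      · simpa using integrable_abs_pow (k := 0) (by norm_num)
      · exact ae_of_all _ fun x => (Real.exp_pos _).le
    rw [gauss_total] at h1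
    have h2 : Real.sqrt (2*π) ≤ 5 * Real.exp (-(1:ℝ)/2) := by
      rw [show (5:ℝ) * Real.exp (-(1:ℝ)/2)
          = Real.sqrt ((5 * Real.exp (-(1:ℝ)/2))^2) by rw [Real.sqrt_sq (by positivity)]]
      apply Real.sqrt_le_sqrt
      have hexpand : (5 * Real.exp (-(1:ℝ)/2))^2 = 25 * Real.exp (-1) := by
        rw [mul_pow, sq (Real.exp _), ← Real.exp_add]; norm_num
      rw [hexpand, Real.exp_neg]
      have he := Real.exp_one_lt_d9
      have hp := Real.pi_lt_d2
      have hepos := Real.exp_pos 1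
      have key : 2 * π * Real.exp 1 ≤ 25 := by nlinarith [Real.pi_gt_three]
      calc 2 * π = 2 * π * Real.exp 1 * (Real.exp 1)⁻¹ := by field_simp
        _ ≤ 25 * (Real.exp 1)⁻¹ :=
            mul_le_mul_of_nonneg_right key (by positivity)
    have h3 : Real.exp (-(1:ℝ)/2) ≤ Real.exp (-a^2/2) := by
      rw [Real.exp_le_exp]
      nlinarith
    nlinarith [Real.exp_pos (-a^2/2)]
  · have hptw : ∀ x ∈ Ioi a, Real.exp (-x^2/2) ≤ a⁻¹ * (x * Real.exp (-x^2/2)) := by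
      intro x hx
      have hx1 : (1:ℝ) < x := lt_trans hgt hx
      have : (1:ℝ) ≤ a⁻¹ * x := by
        rw [← div_eq_inv_mul]
        rw [le_div_iff₀ (by linarith : (0:ℝ) < a)]
        simpa using (le_of_lt hx)
      nlinarith [Real.exp_pos (-x^2/2)]
    have h1 : IntegrableOn (fun x : ℝ => a⁻¹ * (x * Real.exp (-x^2/2))) (Ioi a) := by
      apply Integrable.const_mul
      simpa [IntegrableOn] using (integrable_pow (k := 1) (by norm_num)).integrableOn (s := Ioi a)
    calc ∫ x in Ioi a, Real.exp (-x^2/2)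
        ≤ ∫ x in Ioi a, a⁻¹ * (x * Real.exp (-x^2/2)) :=
          setIntegral_mono_on h0 h1 measurableSet_Ioi hptw
      _ = a⁻¹ * Real.exp (-a^2/2) := by
          rw [MeasureTheory.integral_const_mul, tail1 ha]
      _ ≤ 5 * Real.exp (-a^2/2) := by
          have : a⁻¹ ≤ 1 := by
            rw [inv_le_one_iff₀]; right; linarith
          nlinarith [Real.exp_pos (-a^2/2)]

lemma bnd1 {k : ℕ} (hk : k ≤ 3) {T : ℝ} (hT : 0 ≤ T) :
    ∫ x in Ioi T, |x|^k * Real.exp (-x^2/2) ≤ 4 * (T^2+2) * Real.exp (-T^2/2) := by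
  have hptw : ∀ x ∈ Ioi T, |x|^k * Real.exp (-x^2/2)
      ≤ Real.exp (-x^2/2) + x * Real.exp (-x^2/2) + x^3 * Real.exp (-x^2/2) := by
    intro x hx
    have hx0 : (0:ℝ) ≤ x := le_trans hT (le_of_lt hx)
    rw [abs_of_nonneg hx0]
    have hpoly : x^k ≤ 1 + x + x^3 := by
      interval_cases k
      · simp only [pow_zero]; nlinarith [pow_nonneg hx0 3]
      · simp only [pow_one]; nlinarith [pow_nonneg hx0 3]
      · nlinarith [mul_nonneg hx0 (sq_nonneg (x-1))]
      · linarith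
    nlinarith [Real.exp_pos (-x^2/2)]
  have h0 : IntegrableOn (fun x : ℝ => Real.exp (-x^2/2)) (Ioi T) := by
    simpa using (integrable_abs_pow (k := 0) (by norm_num)).integrableOn (s := Ioi T)
  have h1 : IntegrableOn (fun x : ℝ => x * Real.exp (-x^2/2)) (Ioi T) := by
    simpa using (integrable_pow (k := 1) (by norm_num)).integrableOn (s := Ioi T)
  have h3 : IntegrableOn (fun x : ℝ => x^3 * Real.exp (-x^2/2)) (Ioi T) :=
    (integrable_pow (k := 3) (by norm_num)).integrableOn
  have step1 : ∫ x in Ioi T, |x|^k * Real.exp (-x^2/2)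
      ≤ ∫ x in Ioi T, (Real.exp (-x^2/2) + x * Real.exp (-x^2/2) + x^3 * Real.exp (-x^2/2)) :=
    setIntegral_mono_on ((integrable_abs_pow hk).integrableOn) ((h0.add h1).add h3)
      measurableSet_Ioi hptw
  have h01 : IntegrableOn (fun x : ℝ => Real.exp (-x^2/2) + x * Real.exp (-x^2/2)) (Ioi T) :=
    h0.add h1
  have step2 : ∫ x in Ioi T, (Real.exp (-x^2/2) + x * Real.exp (-x^2/2) + x^3 * Real.exp (-x^2/2))
      = (∫ x in Ioi T, Real.exp (-x^2/2)) + (∫ x in Ioi T, x * Real.exp (-x^2/2))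
        + ∫ x in Ioi T, x^3 * Real.exp (-x^2/2) := by
    rw [integral_add h01 h3, integral_add h0 h1]
  rw [step2] at step1
  rw [tail1 hT, tail3 hT] at step1
  have := tail0 hT
  nlinarith [Real.exp_pos (-T^2/2), sq_nonneg T]

lemma sqrt_two_pi_ge : (2:ℝ) ≤ Real.sqrt (2*π) := by
  exact (Real.le_sqrt (by norm_num) (by positivity)).mpr (by nlinarith [Real.pi_gt_three])

lemma sqrt_two_pi_pos : (0:ℝ) < Real.sqrt (2*π) := lt_of_lt_of_le (by norm_num) sqrt_two_pi_ge

lemma inv_sqrt_le : (Real.sqrt (2*π))⁻¹ ≤ 1/2 := by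
  rw [show (1:ℝ)/2 = 2⁻¹ by norm_num]
  exact inv_anti₀ (by norm_num) sqrt_two_pi_ge

lemma bnd0 {k : ℕ} (hk : k ≤ 3) {η : ℝ} (hη : 0 < η) :
    ∫ x in Icc (-η) η, (Real.sqrt (2*π))⁻¹ * (|x|^k * Real.exp (-x^2/2)) ≤ 2*η := by
  have hptw : ∀ x ∈ Icc (-η) η, (Real.sqrt (2*π))⁻¹ * (|x|^k * Real.exp (-x^2/2)) ≤ 1 := by
    intro x _
    have h1 := key1 hk x
    calc (Real.sqrt (2*π))⁻¹ * (|x|^k * Real.exp (-x^2/2))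
        ≤ (Real.sqrt (2*π))⁻¹ * Real.sqrt (2*π) :=
          mul_le_mul_of_nonneg_left h1 (by positivity)
      _ = 1 := inv_mul_cancel₀ (ne_of_gt sqrt_two_pi_pos)
  calc ∫ x in Icc (-η) η, (Real.sqrt (2*π))⁻¹ * (|x|^k * Real.exp (-x^2/2))
      ≤ ∫ _x in Icc (-η) η, (1:ℝ) := by
        apply setIntegral_mono_on
        · exact ((integrable_abs_pow hk).const_mul _).integrableOn
        · exact integrableOn_const measure_Icc_lt_top.ne
        · exact measurableSet_Icc
        · exact hptw
    _ = 2 * η := by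
        simp [Real.volume_Icc]
        rw [max_eq_left (by linarith)]
        ring
  
lemma bnd2 {k : ℕ} (hk : k ≤ 3) :
    ∫ x : ℝ, (Real.sqrt (2*π))⁻¹ * (|x|^k * Real.exp (-x^2/2)) ≤ 3^k := by
  rw [MeasureTheory.integral_const_mul]
  have hcpos : (0:ℝ) < (Real.sqrt (2*π))⁻¹ := by positivity
  rcases Nat.eq_zero_or_pos k with rfl | hpos
  · simp only [pow_zero, one_mul]
    rw [gauss_total, inv_mul_cancel₀ (ne_of_gt sqrt_two_pi_pos)]
  · have hsplit : ∫ x : ℝ, |x|^k * Real.exp (-x^2/2)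
        = 2 * ∫ x in Ioi (0:ℝ), |x|^k * Real.exp (-x^2/2) := by
      rw [← intervalIntegral.integral_Iic_add_Ioi (b := (0:ℝ)) ((integrable_abs_pow hk).integrableOn)
        ((integrable_abs_pow hk).integrableOn)]
      have hrefl : ∫ x in Iic (0:ℝ), |x|^k * Real.exp (-x^2/2)
          = ∫ x in Ioi (0:ℝ), |x|^k * Real.exp (-x^2/2) := by
        rw [show Set.Iic (0:ℝ) = Set.Iic (-0) by norm_num, ← integral_comp_neg_Ioi]
        simp only [abs_neg, neg_sq]
      rw [hrefl]; ring
    rw [hsplit]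
    have hnonneg : (0:ℝ) ≤ ∫ x in Ioi (0:ℝ), |x|^k * Real.exp (-x^2/2) :=
      setIntegral_nonneg measurableSet_Ioi fun x _ => by positivity
    have hIoi : ∫ x in Ioi (0:ℝ), |x|^k * Real.exp (-x^2/2) ≤ 8 := by
      have h := bnd1 hk (le_refl (0:ℝ))
      norm_num at h
      exact h
    have hc2 := inv_sqrt_le
    interval_cases k
    · have hexact : ∫ x in Ioi (0:ℝ), |x|^1 * Real.exp (-x^2/2) = 1 := by
        have hcongr : ∫ x in Ioi (0:ℝ), |x|^1 * Real.exp (-x^2/2)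
            = ∫ x in Ioi (0:ℝ), x * Real.exp (-x^2/2) := by
          refine setIntegral_congr_fun measurableSet_Ioi fun x hx => ?_
          rw [pow_one, abs_of_nonneg (le_of_lt hx)]
        rw [hcongr, tail1 (le_refl (0:ℝ))]
        norm_num
      rw [hexact]
      nlinarith
    · nlinarith
    · nlinarith
lemma exists_list {n : ℕ} : ∀ (k : ℕ) (ℓ : Fin n → ℕ), (∑ i, ℓ i) ≤ k →
    ∃ l : List (Fin n), l.length ≤ k ∧ ∀ i, ℓ i = l.count i := by
  intro k
  induction k with
  | zero =>
    intro ℓ h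
    refine ⟨[], by simp, fun i => ?_⟩
    have h0 : ∑ i, ℓ i = 0 := Nat.le_zero.mp h
    have := (Finset.sum_eq_zero_iff.mp h0) i (Finset.mem_univ i)
    simp [this]
  | succ k ih =>
    intro ℓ h
    by_cases h0 : ∀ i, ℓ i = 0
    · exact ⟨[], by simp, fun i => by simp [h0 i]⟩
    · push_neg at h0
      obtain ⟨j, hj⟩ := h0
      have hj1 : 1 ≤ ℓ j := Nat.one_le_iff_ne_zero.mpr hj
      set ℓ' := Function.update ℓ j (ℓ j - 1) with hℓ'
      have hsum : ∑ i, ℓ' i + 1 = ∑ i, ℓ i := by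
        rw [hℓ', Finset.sum_update_of_mem (Finset.mem_univ j)]
        have h2 : ∑ i, ℓ i = ℓ j + ∑ i ∈ Finset.univ \ {j}, ℓ i := by
          rw [← Finset.sum_update_of_mem (Finset.mem_univ j)]
          congr 1
          ext i
          rcases eq_or_ne i j with rfl | hne
          · simp
          · simp [Function.update_of_ne hne]
        omega
      obtain ⟨l, hlen, hcount⟩ := ih ℓ' (by omega)
      refine ⟨j :: l, by simpa using hlen, fun i => ?_⟩
      have h2 := hcount i
      rcases eq_or_ne i j with rfl | hne
      · have h1 : ℓ' i = ℓ i - 1 := by simp [hℓ']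
        rw [List.count_cons_self]
        omega
      · have h1 : ℓ' i = ℓ i := by simp [hℓ', Function.update_of_ne hne]
        rw [List.count_cons_of_ne hne.symm]
        omega

def cnt {n : ℕ} : Option (Fin n) → Fin n → ℕ
  | none, _ => 0
  | some a, i => if i = a then 1 else 0

def enc {n : ℕ} (p : Option (Fin n) × Option (Fin n) × Option (Fin n)) : Fin n → ℕ :=
  fun i => cnt p.1 i + cnt p.2.1 i + cnt p.2.2 i

lemma hcc {n : ℕ} (i a : Fin n) (r : List (Fin n)) :
    List.count i (a :: r) = List.count i r + (if i = a then 1 else 0) := by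
  rcases eq_or_ne i a with rfl | h
  · simp [List.count_cons_self]
  · simp [List.count_cons_of_ne h.symm, h]

lemma card_multiIdx3 {n : ℕ} : (multiIdx3 n).card ≤ (n+1)^3 := by
  classical
  have hsub : multiIdx3 n ⊆ Finset.image enc Finset.univ := by
    intro ℓ hℓ
    have hsum : ∑ i, ℓ i ≤ 3 := (Finset.mem_filter.mp hℓ).2
    obtain ⟨l, hlen, hc⟩ := exists_list 3 ℓ hsum
    apply Finset.mem_image.mpr
    match l, hlen with
    | [], _ =>
      refine ⟨(none, none, none), Finset.mem_univ _, funext fun i => ?_⟩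
      rw [show enc ((none : Option (Fin n)), (none : Option (Fin n)), (none : Option (Fin n))) i
        = cnt none i + cnt none i + cnt (none : Option (Fin n)) i from rfl, hc i]
      simp [cnt]
    | [a], _ =>
      refine ⟨(some a, none, none), Finset.mem_univ _, funext fun i => ?_⟩
      rw [show enc (some a, (none : Option (Fin n)), (none : Option (Fin n))) i
        = cnt (some a) i + cnt none i + cnt (none : Option (Fin n)) i from rfl, hc i]
      rw [hcc, List.count_nil]
      simp only [cnt]
      split_ifs <;> omega
    | [a, b], _ =>
      refine ⟨(some a, some b, none), Finset.mem_univ _, funext fun i => ?_⟩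
      rw [show enc (some a, some b, (none : Option (Fin n))) i
        = cnt (some a) i + cnt (some b) i + cnt (none : Option (Fin n)) i from rfl, hc i]
      rw [hcc, hcc, List.count_nil]
      simp only [cnt]
      split_ifs <;> omega
    | [a, b, c], _ =>
      refine ⟨(some a, some b, some c), Finset.mem_univ _, funext fun i => ?_⟩
      rw [show enc (some a, some b, some c) i
        = cnt (some a) i + cnt (some b) i + cnt (some c) i from rfl, hc i]
      rw [hcc, hcc, hcc, List.count_nil]
      simp only [cnt]
      split_ifs <;> omega
    | _ :: _ :: _ :: _ :: _, hlen =>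
      exact absurd hlen (by simp)
  calc (multiIdx3 n).card ≤ (Finset.image enc Finset.univ).card := Finset.card_le_card hsub
    _ ≤ (Finset.univ : Finset (Option (Fin n) × Option (Fin n) × Option (Fin n))).card :=
        Finset.card_image_le
    _ = (n+1)^3 := by simp [Finset.card_univ]; ring

noncomputable def gd (k : ℕ) (x : ℝ) : ℝ :=
  (Real.sqrt (2*π))⁻¹ * (|x|^k * Real.exp (-x^2/2))

lemma gd_cont (k : ℕ) : Continuous (gd k) := by
  unfold gd
  exact continuous_const.mul ((continuous_abs.pow k).mul
    ((continuous_pow 2).neg.div_const 2).rexp)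

lemma gd_nonneg (k : ℕ) (x : ℝ) : 0 ≤ gd k x := by
  unfold gd; positivity

lemma dens_prod (n : ℕ) (y : EuclideanSpace ℝ (Fin n)) :
    (2*π) ^ (-(n:ℝ)/2) * Real.exp (-‖y‖^2/2)
      = ∏ i : Fin n, ((Real.sqrt (2*π))⁻¹ * Real.exp (-(y i)^2/2)) := by
  have h2pi : (0:ℝ) < 2*π := by positivity
  have hnorm : ‖y‖^2 = ∑ i, (y i)^2 := by
    rw [EuclideanSpace.norm_eq, Real.sq_sqrt (by positivity)]
    simp [Real.norm_eq_abs, sq_abs]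
  rw [Finset.prod_mul_distrib, Finset.prod_const, Finset.card_univ, Fintype.card_fin]
  congr 1
  · rw [show -(n:ℝ)/2 = (-(1:ℝ)/2) * n by ring, Real.rpow_mul h2pi.le,
      Real.rpow_natCast]
    congr 1
    rw [show (-(1:ℝ)/2) = -(1/2 : ℝ) by norm_num, Real.rpow_neg h2pi.le,
      ← Real.sqrt_eq_rpow]
  · rw [hnorm, ← Real.exp_sum]
    congr 1
    rw [neg_div, ← Finset.sum_div]
    simp [neg_div]

lemma dens_mul_sum (n : ℕ) (y : EuclideanSpace ℝ (Fin n)) :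
    ((2*π) ^ (-(n:ℝ)/2) * Real.exp (-‖y‖^2/2)) * (∑ ℓ ∈ multiIdx3 n, ∏ i, |y i|^(ℓ i))
      = ∑ ℓ ∈ multiIdx3 n, ∏ i, gd (ℓ i) (y i) := by
  rw [dens_prod, Finset.mul_sum]
  refine Finset.sum_congr rfl fun ℓ _ => ?_
  rw [← Finset.prod_mul_distrib]
  refine Finset.prod_congr rfl fun i _ => ?_
  unfold gd
  ring

lemma indicator_pi_prod {n : ℕ} (s : Fin n → Set ℝ) (f : Fin n → ℝ → ℝ) (x : Fin n → ℝ) :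
    Set.indicator (Set.univ.pi s) (fun x => ∏ i, f i (x i)) x
      = ∏ i, Set.indicator (s i) (f i) (x i) := by
  by_cases hx : x ∈ Set.univ.pi s
  · rw [Set.indicator_of_mem hx]
    exact Finset.prod_congr rfl fun i _ =>
      (Set.indicator_of_mem (hx i (Set.mem_univ i)) _).symm
  · rw [Set.indicator_of_notMem hx]
    rw [Set.mem_pi] at hx; push_neg at hx
    obtain ⟨i, _, hi⟩ := hx
    exact (Finset.prod_eq_zero (Finset.mem_univ i) (Set.indicator_of_notMem hi _)).symm

lemma integrable_ind_prod {n : ℕ} (s : Fin n → Set ℝ) (hs : ∀ i, MeasurableSet (s i))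
    (ℓ : Fin n → ℕ) (hℓ : ∀ i, ℓ i ≤ 3) :
    Integrable (fun x : Fin n → ℝ =>
      Set.indicator (Set.univ.pi s) (fun x => ∏ i, gd (ℓ i) (x i)) x) := by
  have : (fun x : Fin n → ℝ => Set.indicator (Set.univ.pi s) (fun x => ∏ i, gd (ℓ i) (x i)) x)
      = fun x => ∏ i, Set.indicator (s i) (gd (ℓ i)) (x i) :=
    funext fun x => indicator_pi_prod s _ x
  rw [this]
  apply Integrable.fintype_prod (f := fun i => Set.indicator (s i) (gd (ℓ i)))
  intro i
  refine IntegrableOn.integrable_indicator ?_ (hs i)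
  refine Integrable.integrableOn ?_
  have : Integrable (fun x : ℝ => |x| ^ (ℓ i) * Real.exp (-x^2/2)) :=
    integrable_abs_pow (hℓ i)
  unfold gd
  exact this.const_mul _

lemma pi_prod_integral {n : ℕ} (s : Fin n → Set ℝ) (hs : ∀ i, MeasurableSet (s i))
    (ℓ : Fin n → ℕ) :
    ∫ x : Fin n → ℝ, Set.indicator (Set.univ.pi s) (fun x => ∏ i, gd (ℓ i) (x i)) x
      = ∏ i, ∫ x in s i, gd (ℓ i) x := by
  have h1 : (fun x : Fin n → ℝ => Set.indicator (Set.univ.pi s) (fun x => ∏ i, gd (ℓ i) (x i)) x)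
      = fun x => ∏ i, Set.indicator (s i) (gd (ℓ i)) (x i) :=
    funext fun x => indicator_pi_prod s _ x
  rw [h1]
  rw [MeasureTheory.integral_fintype_prod_volume_eq_prod (f := fun i => Set.indicator (s i) (gd (ℓ i)))]
  exact Finset.prod_congr rfl fun i _ => integral_indicator (hs i)


lemma gbnd0 {k : ℕ} (hk : k ≤ 3) {η : ℝ} (hη : 0 < η) :
    ∫ x in Icc (-η) η, gd k x ≤ 2 * η := by
  unfold gd
  exact bnd0 hk hη

lemma gbnd2 {k : ℕ} (hk : k ≤ 3) : ∫ x : ℝ, gd k x ≤ 3 ^ k := by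
  unfold gd
  exact bnd2 hk

lemma gbnd1 {k : ℕ} (hk : k ≤ 3) {T : ℝ} (hT : 0 ≤ T) :
    ∫ x in Ici T, gd k x ≤ 4 * (T^2+2) * Real.exp (-T^2/2) := by
  rw [MeasureTheory.integral_Ici_eq_integral_Ioi]
  unfold gd
  rw [MeasureTheory.integral_const_mul]
  have hI := bnd1 hk hT
  have hInn : 0 ≤ ∫ x in Ioi T, |x|^k * Real.exp (-x^2/2) :=
    setIntegral_nonneg measurableSet_Ioi fun x _ => by positivity
  have hc1 : (Real.sqrt (2*π))⁻¹ ≤ 1 := le_trans inv_sqrt_le (by norm_num)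
  calc (Real.sqrt (2*π))⁻¹ * ∫ x in Ioi T, |x|^k * Real.exp (-x^2/2)
      ≤ 1 * ∫ x in Ioi T, |x|^k * Real.exp (-x^2/2) :=
        mul_le_mul_of_nonneg_right hc1 hInn
    _ = ∫ x in Ioi T, |x|^k * Real.exp (-x^2/2) := one_mul _
    _ ≤ _ := hI

theorem gaussian_strip_estimate (n : ℕ) (hn : 2 ≤ n) (η t : ℝ) (hη : 0 < η) (ht : 0 < t) :
    ∫ y in {y : EuclideanSpace ℝ (Fin n) |
        |y ⟨0, by omega⟩| ≤ η ∧ t ≤ y ⟨1, by omega⟩},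
      (∑ ℓ ∈ multiIdx3 n, ∏ i, |y i| ^ (ℓ i)) ∂(gauss n)
      ≤ 3000 * (n : ℝ) ^ 3 * η * (t ^ 2 + 2) * Real.exp (-t ^ 2 / 2) := by
  classical
  set i0 : Fin n := ⟨0, by omega⟩ with hi0
  set i1 : Fin n := ⟨1, by omega⟩ with hi1
  have hi01 : i0 ≠ i1 := by simp [hi0, hi1, Fin.ext_iff]
  set S : Set (EuclideanSpace ℝ (Fin n)) := {y | |y i0| ≤ η ∧ t ≤ y i1} with hS
  set s : Fin n → Set ℝ :=
    fun i => if i = i0 then Icc (-η) η else if i = i1 then Ici t else univ with hsdef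
  have hsm : ∀ i, MeasurableSet (s i) := by
    intro i
    rw [hsdef]
    dsimp only
    split_ifs
    · exact measurableSet_Icc
    · exact measurableSet_Ici
    · exact MeasurableSet.univ
  set dens : EuclideanSpace ℝ (Fin n) → ℝ :=
    fun y => (2 * Real.pi) ^ (-(n : ℝ) / 2) * Real.exp (-‖y‖ ^ 2 / 2) with hdens
  set F : EuclideanSpace ℝ (Fin n) → ℝ :=
    fun y => ∑ ℓ ∈ multiIdx3 n, ∏ i, |y i| ^ (ℓ i) with hF
  have hSm : MeasurableSet S := by
    have h1 : S = (fun y : EuclideanSpace ℝ (Fin n) => y i0) ⁻¹' (Icc (-η) η)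
        ∩ (fun y : EuclideanSpace ℝ (Fin n) => y i1) ⁻¹' (Ici t) := by
      ext y
      simp only [hS, Set.mem_setOf_eq, Set.mem_inter_iff, Set.mem_preimage, Set.mem_Icc,
        Set.mem_Ici, abs_le]
    rw [h1]
    have hm : ∀ i : Fin n, Measurable (fun y : EuclideanSpace ℝ (Fin n) => y i) :=
      fun i => by fun_prop
    exact ((hm i0) measurableSet_Icc).inter ((hm i1) measurableSet_Ici)
  have hdens_meas : Measurable fun y : EuclideanSpace ℝ (Fin n) => (dens y).toNNReal := by
    apply Measurable.real_toNNReal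
    apply Measurable.const_mul
    exact (measurable_norm.pow_const 2).neg.div_const 2 |>.exp
  -- Step 1: withDensity to density-integral
  have step1 : ∫ y in S, F y ∂(gauss n) = ∫ y in S, dens y * F y := by
    rw [show gauss n = volume.withDensity (fun y => ENNReal.ofReal (dens y)) from rfl]
    rw [restrict_withDensity hSm]
    rw [show (fun y : EuclideanSpace ℝ (Fin n) => ENNReal.ofReal (dens y))
      = (fun y => ((dens y).toNNReal : ℝ≥0∞)) from rfl]
    rw [integral_withDensity_eq_integral_smul hdens_meas]
    refine setIntegral_congr_fun hSm fun y _ => ?_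
    rw [NNReal.smul_def, Real.coe_toNNReal _ (by positivity)]
    first
    | rfl
    | exact smul_eq_mul _ _
    | exact smul_eq_mul

  -- Step 2: to indicator on full space
  have step2 : ∫ y in S, dens y * F y = ∫ y, S.indicator (fun y => dens y * F y) y :=
    (integral_indicator hSm).symm
  -- Step 3: transfer to pi space
  have mp := (EuclideanSpace.volume_preserving_symm_measurableEquiv_toLp (Fin n)).symm
  have step3 : ∫ y, S.indicator (fun y => dens y * F y) y
      = ∫ x : Fin n → ℝ, S.indicator (fun y => dens y * F y)
          ((MeasurableEquiv.toLp 2 (Fin n → ℝ)) x) :=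
    (mp.integral_comp' (S.indicator (fun y => dens y * F y))).symm
  -- Step 4: pointwise identification
  have step4 : ∀ x : Fin n → ℝ,
      S.indicator (fun y => dens y * F y) ((MeasurableEquiv.toLp 2 (Fin n → ℝ)) x)
      = ∑ ℓ ∈ multiIdx3 n,
          Set.indicator (Set.univ.pi s) (fun x => ∏ i, gd (ℓ i) (x i)) x := by
    intro x
    have hs_i0 : s i0 = Icc (-η) η := by rw [hsdef]; dsimp only; rw [if_pos rfl]
    have hs_i1 : s i1 = Ici t := by
      rw [hsdef]; dsimp only; rw [if_neg (Ne.symm hi01), if_pos rfl]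
    have hs_other : ∀ i, i ≠ i0 → i ≠ i1 → s i = univ := fun i hA hB => by
      rw [hsdef]; dsimp only; rw [if_neg hA, if_neg hB]
    have hmem : ((MeasurableEquiv.toLp 2 (Fin n → ℝ)) x ∈ S) ↔ x ∈ Set.univ.pi s := by
      constructor
      · rintro ⟨h1, h2⟩ i _
        rcases eq_or_ne i i0 with rfl | hA
        · rw [hs_i0]; exact Set.mem_Icc.mpr (abs_le.mp h1)
        rcases eq_or_ne i i1 with rfl | hB
        · rw [hs_i1]; exact h2
        · rw [hs_other i hA hB]; trivial
      · intro h
        refine ⟨abs_le.mpr ?_, ?_⟩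
        · have h0 := h i0 (Set.mem_univ _); rw [hs_i0] at h0; exact Set.mem_Icc.mp h0
        · have h0 := h i1 (Set.mem_univ _); rw [hs_i1] at h0; exact h0
    by_cases hx : x ∈ Set.univ.pi s
    · rw [Set.indicator_of_mem (hmem.mpr hx)]
      calc dens ((MeasurableEquiv.toLp 2 (Fin n → ℝ)) x)
            * F ((MeasurableEquiv.toLp 2 (Fin n → ℝ)) x)
          = ∑ ℓ ∈ multiIdx3 n, ∏ i, gd (ℓ i) (x i) := by
            rw [hdens, hF]; exact dens_mul_sum n _
        _ = ∑ ℓ ∈ multiIdx3 n,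
              Set.indicator (Set.univ.pi s) (fun x => ∏ i, gd (ℓ i) (x i)) x :=
            Finset.sum_congr rfl fun ℓ _ =>
              (Set.indicator_of_mem hx (fun x => ∏ i, gd (ℓ i) (x i))).symm
    · rw [Set.indicator_of_notMem (fun h => hx (hmem.mp h))]
      exact (Finset.sum_eq_zero fun ℓ _ => Set.indicator_of_notMem hx _).symm
  -- hoisted set facts
  have hs_i0 : s i0 = Icc (-η) η := by rw [hsdef]; dsimp only; rw [if_pos rfl]
  have hs_i1 : s i1 = Ici t := by
    rw [hsdef]; dsimp only; rw [if_neg (Ne.symm hi01), if_pos rfl]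
  have hs_other : ∀ i, i ≠ i0 → i ≠ i1 → s i = univ := fun i hA hB => by
    rw [hsdef]; dsimp only; rw [if_neg hA, if_neg hB]
  have hmem3 : ∀ ℓ ∈ multiIdx3 n, ∑ i, ℓ i ≤ 3 := fun ℓ hℓ => (Finset.mem_filter.mp hℓ).2
  have hcoord3 : ∀ ℓ ∈ multiIdx3 n, ∀ i, ℓ i ≤ 3 := by
    intro ℓ hℓ i
    refine le_trans ?_ (hmem3 ℓ hℓ)
    exact Finset.single_le_sum (f := fun i => ℓ i) (fun j _ => Nat.zero_le _) (Finset.mem_univ i)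
  -- Step 5 + 6
  have step56 : ∫ x : Fin n → ℝ, ∑ ℓ ∈ multiIdx3 n,
      Set.indicator (Set.univ.pi s) (fun x => ∏ i, gd (ℓ i) (x i)) x
      = ∑ ℓ ∈ multiIdx3 n, ∏ i, ∫ x in s i, gd (ℓ i) x := by
    rw [integral_finset_sum (multiIdx3 n)
      (fun ℓ hℓ => integrable_ind_prod s hsm ℓ (hcoord3 ℓ hℓ))]
    exact Finset.sum_congr rfl fun ℓ _ => pi_prod_integral s hsm ℓ
  -- per-coordinate bounds
  set E := Real.exp (-t^2/2) with hE
  have hEpos : 0 < E := Real.exp_pos _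
  have hterm : ∀ ℓ ∈ multiIdx3 n,
      ∏ i, ∫ x in s i, gd (ℓ i) x ≤ 216 * (η * ((t^2+2) * E)) := by
    intro ℓ hℓ
    have hJnn : ∀ i, 0 ≤ ∫ x in s i, gd (ℓ i) x :=
      fun i => setIntegral_nonneg (hsm i) fun x _ => gd_nonneg _ _
    have hJ0 : ∫ x in s i0, gd (ℓ i0) x ≤ 2 * η := by
      rw [hs_i0]
      exact gbnd0 (hcoord3 ℓ hℓ i0) hη
    have hJ1 : ∫ x in s i1, gd (ℓ i1) x ≤ 4 * (t^2+2) * E := by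
      rw [hs_i1, hE]
      exact gbnd1 (hcoord3 ℓ hℓ i1) ht.le
    have hJother : ∀ i, i ≠ i0 → i ≠ i1 → ∫ x in s i, gd (ℓ i) x ≤ 3 ^ (ℓ i) := by
      intro i hA hB
      rw [hs_other i hA hB, Measure.restrict_univ]
      exact gbnd2 (hcoord3 ℓ hℓ i)
    have hsplit : ∏ i, ∫ x in s i, gd (ℓ i) x
        = (∫ x in s i0, gd (ℓ i0) x) * ((∫ x in s i1, gd (ℓ i1) x)
          * ∏ i ∈ (Finset.univ.erase i0).erase i1, ∫ x in s i, gd (ℓ i) x) := by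
      rw [← Finset.mul_prod_erase _ _ (Finset.mem_univ i0)]
      congr 1
      rw [← Finset.mul_prod_erase _ _
        (Finset.mem_erase.mpr ⟨Ne.symm hi01, Finset.mem_univ i1⟩)]
    have hrest : ∏ i ∈ (Finset.univ.erase i0).erase i1, ∫ x in s i, gd (ℓ i) x ≤ 27 := by
      calc ∏ i ∈ (Finset.univ.erase i0).erase i1, ∫ x in s i, gd (ℓ i) x
          ≤ ∏ i ∈ (Finset.univ.erase i0).erase i1, (3:ℝ) ^ (ℓ i) := by
            refine Finset.prod_le_prod (fun i _ => hJnn i) (fun i hi => ?_)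
            have h1 := Finset.mem_erase.mp hi
            have h2 := Finset.mem_erase.mp h1.2
            exact hJother i h2.1 h1.1
        _ = (3:ℝ) ^ (∑ i ∈ (Finset.univ.erase i0).erase i1, ℓ i) := by
            rw [← Finset.prod_pow_eq_pow_sum]
        _ ≤ (3:ℝ) ^ 3 := by
            apply pow_le_pow_right₀ (by norm_num)
            refine le_trans ?_ (hmem3 ℓ hℓ)
            exact Finset.sum_le_sum_of_subset (Finset.subset_univ _)
        _ = 27 := by norm_num
    have hrestnn : 0 ≤ ∏ i ∈ (Finset.univ.erase i0).erase i1, ∫ x in s i, gd (ℓ i) x :=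
      Finset.prod_nonneg fun i _ => hJnn i
    rw [hsplit]
    have h1 : (∫ x in s i1, gd (ℓ i1) x)
        * (∏ i ∈ (Finset.univ.erase i0).erase i1, ∫ x in s i, gd (ℓ i) x)
        ≤ (4 * (t^2+2) * E) * 27 :=
      mul_le_mul hJ1 hrest hrestnn (by positivity)
    have h2 : (∫ x in s i0, gd (ℓ i0) x) * ((∫ x in s i1, gd (ℓ i1) x)
        * ∏ i ∈ (Finset.univ.erase i0).erase i1, ∫ x in s i, gd (ℓ i) x)
        ≤ (2 * η) * ((4 * (t^2+2) * E) * 27) :=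
      mul_le_mul hJ0 h1 (mul_nonneg (hJnn i1) hrestnn) (by positivity)
    calc _ ≤ (2 * η) * ((4 * (t^2+2) * E) * 27) := h2
      _ = 216 * (η * ((t^2+2) * E)) := by ring
  -- sum up
  have hsum : ∑ ℓ ∈ multiIdx3 n, ∏ i, ∫ x in s i, gd (ℓ i) x
      ≤ (multiIdx3 n).card • (216 * (η * ((t^2+2) * E))) :=
    Finset.sum_le_card_nsmul _ _ _ hterm
  have hcard : ((multiIdx3 n).card : ℝ) ≤ 8 * (n:ℝ)^3 := by
    have h1 : ((multiIdx3 n).card : ℝ) ≤ ((n+1 : ℕ) : ℝ)^3 := by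
      have := card_multiIdx3 (n := n)
      exact_mod_cast this
    refine le_trans h1 ?_
    have h2 : ((n+1 : ℕ) : ℝ) ≤ 2 * n := by
      have hcast : (1:ℝ) ≤ (n:ℝ) := by exact_mod_cast (by omega : 1 ≤ n)
      push_cast
      linarith
    calc ((n+1 : ℕ) : ℝ)^3 ≤ (2 * n)^3 := by
          apply pow_le_pow_left₀ (by positivity) h2
      _ = 8 * (n:ℝ)^3 := by ring
  -- final chain
  calc ∫ y in {y : EuclideanSpace ℝ (Fin n) |
        |y ⟨0, by omega⟩| ≤ η ∧ t ≤ y ⟨1, by omega⟩},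
      (∑ ℓ ∈ multiIdx3 n, ∏ i, |y i| ^ (ℓ i)) ∂(gauss n)
      = ∑ ℓ ∈ multiIdx3 n, ∏ i, ∫ x in s i, gd (ℓ i) x := by
        rw [show {y : EuclideanSpace ℝ (Fin n) |
            |y ⟨0, by omega⟩| ≤ η ∧ t ≤ y ⟨1, by omega⟩} = S from rfl]
        rw [show (fun y : EuclideanSpace ℝ (Fin n) => ∑ ℓ ∈ multiIdx3 n, ∏ i, |y i| ^ (ℓ i))
          = F from rfl]
        rw [step1, step2, step3]
        rw [show (fun x : Fin n → ℝ => S.indicator (fun y => dens y * F y)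
            ((MeasurableEquiv.toLp 2 (Fin n → ℝ)) x))
          = (fun x : Fin n → ℝ => ∑ ℓ ∈ multiIdx3 n,
              Set.indicator (Set.univ.pi s) (fun x => ∏ i, gd (ℓ i) (x i)) x)
          from funext step4]
        exact step56
    _ ≤ (multiIdx3 n).card • (216 * (η * ((t^2+2) * E))) := hsum
    _ = ((multiIdx3 n).card : ℝ) * (216 * (η * ((t^2+2) * E))) := nsmul_eq_mul _ _
    _ ≤ 8 * (n:ℝ)^3 * (216 * (η * ((t^2+2) * E))) := by
        apply mul_le_mul_of_nonneg_right hcard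
        positivity
    _ ≤ 3000 * (n : ℝ) ^ 3 * η * (t ^ 2 + 2) * Real.exp (-t ^ 2 / 2) := by
        rw [hE]
        have hn3 : (0:ℝ) ≤ (n:ℝ)^3 := by positivity
        nlinarith [Real.exp_pos (-t^2/2), mul_pos (mul_pos hη (by positivity : (0:ℝ) < t^2+2))
          (Real.exp_pos (-t^2/2)), hn3]
end

section
/- Let n ≥ 1, let f : ℝⁿ → ℝ be bounded and measurable, and let x ∈ ℝⁿ. Then the map ρ ↦ T_ρ f(x) is differentiable on (-1,1) and, for every ρ ∈ (-1,1), (d/dρ) T_ρ f(x) = (1/√(1-ρ²)) [ ⟨x, ∫_{ℝⁿ} y f(xρ + y√(1-ρ²)) dγ_n(y)⟩ + (ρ/√(1-ρ²)) ∫_{ℝⁿ} (Σ_{i=1}^n (1 - y_i²)) f(xρ + y√(1-ρ²)) dγ_n(y) ]. -/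
open MeasureTheory

namespace OUaux

open Real
open scoped ENNReal NNReal

noncomputable def gphi (n : ℕ) (y : EuclideanSpace ℝ (Fin n)) : ℝ :=
  (2 * Real.pi) ^ (-(n : ℝ) / 2) * Real.exp (-‖y‖ ^ 2 / 2)

lemma gphi_nonneg (n : ℕ) (y : EuclideanSpace ℝ (Fin n)) : 0 ≤ gphi n y := by
  have : (0:ℝ) < 2 * Real.pi := by positivity
  unfold gphi; positivity

lemma gphi_cont (n : ℕ) : Continuous (gphi n) :=
  continuous_const.mul (((continuous_norm.pow 2).neg.div_const 2).rexp)

lemma gauss_eq (n : ℕ) :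
    gauss n = volume.withDensity (fun y => (Real.toNNReal (gphi n y) : ℝ≥0∞)) := rfl

lemma integral_gauss {n : ℕ} {B : Type*} [NormedAddCommGroup B] [NormedSpace ℝ B]
    (g : EuclideanSpace ℝ (Fin n) → B) :
    ∫ y, g y ∂(gauss n) = ∫ y, gphi n y • g y := by
  rw [gauss_eq, integral_withDensity_eq_integral_smul
    ((gphi_cont n).measurable.real_toNNReal) g]
  congr 1; ext y
  rw [NNReal.smul_def, Real.coe_toNNReal _ (gphi_nonneg n y)]

lemma integrable_gauss_iff {n : ℕ} {B : Type*} [NormedAddCommGroup B] [NormedSpace ℝ B]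
    (g : EuclideanSpace ℝ (Fin n) → B) :
    Integrable g (gauss n) ↔ Integrable (fun y => gphi n y • g y) volume := by
  rw [gauss_eq]
  rw [integrable_withDensity_iff_integrable_smul ((gphi_cont n).measurable.real_toNNReal)]
  constructor <;> intro h <;> refine h.congr (Filter.Eventually.of_forall fun y => ?_) <;>
    simp only [NNReal.smul_def, Real.coe_toNNReal _ (gphi_nonneg n y)]

lemma integral_shift_smul {n : ℕ} {B : Type*} [NormedAddCommGroup B] [NormedSpace ℝ B]
    (c : EuclideanSpace ℝ (Fin n)) {s : ℝ} (hs : 0 < s)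
    (H : EuclideanSpace ℝ (Fin n) → B) :
    ∫ z, H z = (s ^ n) • ∫ y, H (c + s • y) := by
  have h1 : ∫ z, H z = ∫ z, H (c + z) := (integral_add_left_eq_self H c).symm
  have h2 : ∫ y, H (c + s • y) = |(s ^ Module.finrank ℝ (EuclideanSpace ℝ (Fin n)))⁻¹| • ∫ z, H (c + z) :=
    Measure.integral_comp_smul volume (fun z => H (c + z)) s
  rw [h1, h2, finrank_euclideanSpace_fin, smul_smul, abs_inv, abs_of_pos (by positivity),
    mul_inv_cancel₀ (by positivity), one_smul]

lemma integrable_gaussian (n : ℕ) {b : ℝ} (hb : 0 < b) :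
    Integrable (fun z : EuclideanSpace ℝ (Fin n) => Real.exp (-b * ‖z‖ ^ 2)) volume := by
  have h := (GaussianFourier.integrable_cexp_neg_mul_sq_norm_add
    (V := EuclideanSpace ℝ (Fin n)) (b := (b : ℂ)) (by simpa using hb) 0 0).norm
  refine h.congr (Filter.Eventually.of_forall fun v => ?_)
  simp [Complex.norm_exp, Complex.add_re, Complex.mul_re,
    ← Complex.ofReal_pow, Complex.ofReal_re]


lemma poly_le {a b c t : ℝ} (ha : 0 ≤ a) (hb : 0 ≤ b) (hc : 0 ≤ c) (ht : 0 ≤ t) :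
    a + b * t + c * t ^ 2 ≤ (a + 3 * b + 8 * c) * Real.exp (t ^ 2 / 8) := by
  have h := Real.add_one_le_exp (t ^ 2 / 8)
  nlinarith [mul_nonneg hb (sq_nonneg (t - 4/3)), mul_nonneg hc (sq_nonneg t),
    mul_nonneg ha (sq_nonneg t)]

lemma poly_gauss {a b c t : ℝ} (ha : 0 ≤ a) (hb : 0 ≤ b) (hc : 0 ≤ c) (ht : 0 ≤ t) :
    (a + b * t + c * t ^ 2) * Real.exp (-t ^ 2 / 4)
      ≤ (a + 3 * b + 8 * c) * Real.exp (-t ^ 2 / 8) := by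
  calc (a + b * t + c * t ^ 2) * Real.exp (-t ^ 2 / 4)
      ≤ ((a + 3 * b + 8 * c) * Real.exp (t ^ 2 / 8)) * Real.exp (-t ^ 2 / 4) :=
        mul_le_mul_of_nonneg_right (poly_le ha hb hc ht) (Real.exp_nonneg _)
    _ = (a + 3 * b + 8 * c) * Real.exp (-t ^ 2 / 8) := by
        rw [mul_assoc, ← Real.exp_add]
        congr 2
        ring

noncomputable def G (n : ℕ) (x : EuclideanSpace ℝ (Fin n)) (r : ℝ)
    (z : EuclideanSpace ℝ (Fin n)) : ℝ :=
  (2 * Real.pi) ^ (-(n : ℝ) / 2) *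
    ((1 - r ^ 2) ^ (-(n : ℝ) / 2) * Real.exp (-‖z - r • x‖ ^ 2 / (2 * (1 - r ^ 2))))

noncomputable def W (n : ℕ) (x : EuclideanSpace ℝ (Fin n)) (r : ℝ)
    (z : EuclideanSpace ℝ (Fin n)) : ℝ :=
  (n : ℝ) * r / (1 - r ^ 2) + (inner ℝ x (z - r • x) : ℝ) / (1 - r ^ 2)
    - r * ‖z - r • x‖ ^ 2 / (1 - r ^ 2) ^ 2

noncomputable def D (n : ℕ) (x : EuclideanSpace ℝ (Fin n)) (r : ℝ)
    (z : EuclideanSpace ℝ (Fin n)) : ℝ := G n x r z * W n x r z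

lemma hasDerivAt_G (n : ℕ) (x : EuclideanSpace ℝ (Fin n)) {r : ℝ}
    (hr1 : -1 < r) (hr2 : r < 1) (z : EuclideanSpace ℝ (Fin n)) :
    HasDerivAt (fun t => G n x t z) (D n x r z) r := by
  have h1 : 0 < 1 - r ^ 2 := by nlinarith
  set c : ℝ := (inner ℝ z x : ℝ) with hc
  have hu : HasDerivAt (fun t : ℝ => 1 - t ^ 2) (-(2 * r)) r := by
    simpa using (hasDerivAt_pow 2 r).const_sub 1
  have hA : HasDerivAt (fun t : ℝ => (1 - t ^ 2) ^ (-(n : ℝ) / 2))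
      ((n : ℝ) * r * ((1 - r ^ 2) ^ (-(n : ℝ) / 2) / (1 - r ^ 2))) r := by
    have h := (Real.hasDerivAt_rpow_const (x := 1 - r ^ 2) (p := -(n : ℝ) / 2)
      (Or.inl h1.ne')).comp r hu
    refine h.congr_deriv ?_
    rw [show -(n : ℝ) / 2 - 1 = -(n : ℝ) / 2 + (-1) from by ring, Real.rpow_add h1,
      Real.rpow_neg_one]
    field_simp
  have hfe : (fun t : ℝ => ‖z - t • x‖ ^ 2)
      = fun t : ℝ => ‖z‖ ^ 2 - 2 * c * t + t ^ 2 * ‖x‖ ^ 2 := by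
    funext t
    rw [norm_sub_sq_real]
    simp only [inner_smul_right, norm_smul, Real.norm_eq_abs, mul_pow, sq_abs]
    ring
  have hlin : HasDerivAt (fun t : ℝ => 2 * c * t) (2 * c) r := by
    simpa using (hasDerivAt_id r).const_mul (2 * c)
  have hP : HasDerivAt (fun t : ℝ => ‖z‖ ^ 2 - 2 * c * t + t ^ 2 * ‖x‖ ^ 2)
      (-(2 * c) + 2 * r * ‖x‖ ^ 2) r := by
    have := (hlin.const_sub (‖z‖ ^ 2)).add ((hasDerivAt_pow 2 r).mul_const (‖x‖ ^ 2))
    exact this.congr_deriv (by norm_num)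
  have hq : HasDerivAt (fun t : ℝ => ‖z - t • x‖ ^ 2) (-(2 * c) + 2 * r * ‖x‖ ^ 2) r := by
    rw [hfe]; exact hP
  have hden : HasDerivAt (fun t : ℝ => 2 * (1 - t ^ 2)) (2 * -(2 * r)) r := hu.const_mul 2
  have hdenne : 2 * (1 - r ^ 2) ≠ 0 := by positivity
  have hB : HasDerivAt (fun t : ℝ => -‖z - t • x‖ ^ 2 / (2 * (1 - t ^ 2)))
      ((-(-(2 * c) + 2 * r * ‖x‖ ^ 2) * (2 * (1 - r ^ 2))
          - -‖z - r • x‖ ^ 2 * (2 * -(2 * r))) / (2 * (1 - r ^ 2)) ^ 2) r :=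
    hq.neg.div hden hdenne
  have hG := (hA.mul hB.exp).const_mul ((2 * Real.pi) ^ (-(n : ℝ) / 2))
  refine hG.congr_deriv ?_
  unfold D G W
  have hinner : (inner ℝ x (z - r • x) : ℝ) = c - r * ‖x‖ ^ 2 := by
    rw [inner_sub_right, inner_smul_right, hc, real_inner_comm, real_inner_self_eq_norm_sq]
  rw [hinner]
  set A : ℝ := (1 - r ^ 2) ^ (-(n : ℝ) / 2)
  set Ex : ℝ := Real.exp (-‖z - r • x‖ ^ 2 / (2 * (1 - r ^ 2)))
  set Q : ℝ := ‖z - r • x‖ ^ 2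
  field_simp
  ring

lemma G_nonneg (n : ℕ) (x : EuclideanSpace ℝ (Fin n)) {r : ℝ} (hP : 0 < 1 - r ^ 2)
    (z : EuclideanSpace ℝ (Fin n)) : 0 ≤ G n x r z := by
  unfold G
  have h2π : (0:ℝ) < 2 * Real.pi := by positivity
  positivity

lemma G_bound (n : ℕ) (x : EuclideanSpace ℝ (Fin n)) {δ r : ℝ} (hδ : 0 < δ)
    (h1r : δ ≤ 1 - r ^ 2) (z : EuclideanSpace ℝ (Fin n)) :
    G n x r z ≤ (2 * Real.pi) ^ (-(n : ℝ) / 2) * δ ^ (-(n : ℝ) / 2) *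
      Real.exp (‖x‖ ^ 2 / 2) * Real.exp (-‖z‖ ^ 2 / 4) := by
  have hP : 0 < 1 - r ^ 2 := lt_of_lt_of_le hδ h1r
  have hc0 : (0:ℝ) < (2 * Real.pi) ^ (-(n : ℝ) / 2) :=
    Real.rpow_pos_of_pos (by positivity) _
  have hexpo : -(n : ℝ) / 2 ≤ 0 := by
    have : (0:ℝ) ≤ n := Nat.cast_nonneg n
    linarith
  have hA : (1 - r ^ 2) ^ (-(n : ℝ) / 2) ≤ δ ^ (-(n : ℝ) / 2) :=
    Real.rpow_le_rpow_of_nonpos hδ h1r hexpo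
  have hr2 : r ^ 2 ≤ 1 := by nlinarith
  have hra : |r| ≤ 1 := abs_le.2 ⟨by nlinarith, by nlinarith⟩
  have hz2 : ‖z‖ ^ 2 ≤ 2 * ‖z - r • x‖ ^ 2 + 2 * ‖x‖ ^ 2 := by
    have h' : ‖z‖ ≤ ‖z - r • x‖ + ‖x‖ := by
      calc ‖z‖ = ‖(z - r • x) + r • x‖ := by rw [sub_add_cancel]
        _ ≤ ‖z - r • x‖ + ‖r • x‖ := norm_add_le _ _
        _ ≤ ‖z - r • x‖ + ‖x‖ := by
            rw [norm_smul, Real.norm_eq_abs]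
            nlinarith [norm_nonneg x, abs_nonneg r]
    nlinarith [norm_nonneg (z - r • x), norm_nonneg z, norm_nonneg x,
      sq_nonneg (‖z - r • x‖ - ‖x‖)]
  set Q : ℝ := ‖z - r • x‖ ^ 2 with hQdef
  have hQ0 : 0 ≤ Q := sq_nonneg _
  have he : Real.exp (-Q / (2 * (1 - r ^ 2)))
      ≤ Real.exp (‖x‖ ^ 2 / 2) * Real.exp (-‖z‖ ^ 2 / 4) := by
    rw [← Real.exp_add]
    apply Real.exp_le_exp.2
    have e1 : -Q / (2 * (1 - r ^ 2)) ≤ -Q / 2 := by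
      rw [div_le_div_iff₀ (by positivity) (by norm_num)]
      nlinarith [mul_nonneg hQ0 (sq_nonneg r)]
    nlinarith
  show (2 * Real.pi) ^ (-(n : ℝ) / 2) *
    ((1 - r ^ 2) ^ (-(n : ℝ) / 2) * Real.exp (-Q / (2 * (1 - r ^ 2)))) ≤ _
  calc (2 * Real.pi) ^ (-(n : ℝ) / 2) *
      ((1 - r ^ 2) ^ (-(n : ℝ) / 2) * Real.exp (-Q / (2 * (1 - r ^ 2))))
      ≤ (2 * Real.pi) ^ (-(n : ℝ) / 2) *
        (δ ^ (-(n : ℝ) / 2) * (Real.exp (‖x‖ ^ 2 / 2) * Real.exp (-‖z‖ ^ 2 / 4))) := by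
        apply mul_le_mul_of_nonneg_left _ hc0.le
        exact mul_le_mul hA he (Real.exp_nonneg _)
          (le_of_lt (Real.rpow_pos_of_pos hδ _))
    _ = _ := by ring

lemma W_abs_bound (n : ℕ) (x : EuclideanSpace ℝ (Fin n)) {δ r : ℝ} (hδ : 0 < δ)
    (h1r : δ ≤ 1 - r ^ 2) (z : EuclideanSpace ℝ (Fin n)) :
    |W n x r z| ≤ ((n : ℝ) / δ + ‖x‖ ^ 2 / δ + ‖x‖ ^ 2 / δ ^ 2)
      + (‖x‖ / δ + 2 * ‖x‖ / δ ^ 2) * ‖z‖ + (1 / δ ^ 2) * ‖z‖ ^ 2 := by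
  have hP : 0 < 1 - r ^ 2 := lt_of_lt_of_le hδ h1r
  have hr2 : r ^ 2 ≤ 1 := by nlinarith
  have hrabs : |r| ≤ 1 := abs_le.2 ⟨by nlinarith, by nlinarith⟩
  have hzx : ‖z - r • x‖ ≤ ‖z‖ + ‖x‖ := by
    calc ‖z - r • x‖ ≤ ‖z‖ + ‖r • x‖ := norm_sub_le _ _
      _ ≤ ‖z‖ + ‖x‖ := by
          rw [norm_smul, Real.norm_eq_abs]
          nlinarith [norm_nonneg x, abs_nonneg r]
  have w1 : |(n : ℝ) * r / (1 - r ^ 2)| ≤ (n : ℝ) / δ := by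
    rw [abs_div, abs_of_pos hP, abs_mul, Nat.abs_cast]
    apply div_le_div₀ (Nat.cast_nonneg n) _ hδ h1r
    nlinarith [Nat.cast_nonneg (α := ℝ) n]
  have w2 : |(inner ℝ x (z - r • x) : ℝ) / (1 - r ^ 2)| ≤ ‖x‖ * (‖z‖ + ‖x‖) / δ := by
    rw [abs_div, abs_of_pos hP]
    apply div_le_div₀ _ _ hδ h1r
    · positivity
    · calc |(inner ℝ x (z - r • x) : ℝ)| ≤ ‖x‖ * ‖z - r • x‖ := abs_real_inner_le_norm _ _
        _ ≤ ‖x‖ * (‖z‖ + ‖x‖) := by nlinarith [norm_nonneg x]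
  have w3 : |r * ‖z - r • x‖ ^ 2 / (1 - r ^ 2) ^ 2| ≤ (‖z‖ + ‖x‖) ^ 2 / δ ^ 2 := by
    rw [abs_div, abs_of_pos (by positivity : (0:ℝ) < (1 - r ^ 2) ^ 2)]
    apply div_le_div₀ (by positivity) _ (by positivity) (by nlinarith)
    rw [abs_mul, abs_of_nonneg (sq_nonneg (‖z - r • x‖))]
    nlinarith [sq_nonneg (‖z - r • x‖), norm_nonneg (z - r • x), norm_nonneg z, norm_nonneg x]
  have tri0 : ∀ A B C : ℝ, |A + B - C| ≤ |A| + |B| + |C| := by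
    intro A B C
    calc |A + B - C| = |(A + B) + (-C)| := by ring_nf
      _ ≤ |A + B| + |(-C)| := abs_add_le _ _
      _ ≤ |A| + |B| + |C| := by rw [abs_neg]; linarith [abs_add_le A B]
  have tri : |W n x r z| ≤ |(n : ℝ) * r / (1 - r ^ 2)|
      + |(inner ℝ x (z - r • x) : ℝ) / (1 - r ^ 2)| + |r * ‖z - r • x‖ ^ 2 / (1 - r ^ 2) ^ 2| :=
    tri0 _ _ _
  have expand : ‖x‖ * (‖z‖ + ‖x‖) / δ + (‖z‖ + ‖x‖) ^ 2 / δ ^ 2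
      ≤ (‖x‖ ^ 2 / δ + ‖x‖ ^ 2 / δ ^ 2) + (‖x‖ / δ + 2 * ‖x‖ / δ ^ 2) * ‖z‖
        + (1 / δ ^ 2) * ‖z‖ ^ 2 := by
    rw [div_add_div _ _ (ne_of_gt hδ) (by positivity)]
    field_simp
    ring_nf
    nlinarith [norm_nonneg x, norm_nonneg z, sq_nonneg δ]
  calc |W n x r z| ≤ (n : ℝ) / δ + ‖x‖ * (‖z‖ + ‖x‖) / δ + (‖z‖ + ‖x‖) ^ 2 / δ ^ 2 := by
        have := tri
        linarith [w1, w2, w3]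
    _ ≤ _ := by linarith [expand]

noncomputable def Cb (n : ℕ) (x : EuclideanSpace ℝ (Fin n)) (δ : ℝ) : ℝ :=
  (2 * Real.pi) ^ (-(n : ℝ) / 2) * δ ^ (-(n : ℝ) / 2) * Real.exp (‖x‖ ^ 2 / 2) *
    (((n : ℝ) / δ + ‖x‖ ^ 2 / δ + ‖x‖ ^ 2 / δ ^ 2)
      + 3 * (‖x‖ / δ + 2 * ‖x‖ / δ ^ 2) + 8 * (1 / δ ^ 2))

lemma D_bound (n : ℕ) (x : EuclideanSpace ℝ (Fin n)) {δ r : ℝ} (hδ : 0 < δ)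
    (h1r : δ ≤ 1 - r ^ 2) (z : EuclideanSpace ℝ (Fin n)) :
    |D n x r z| ≤ Cb n x δ * Real.exp (-‖z‖ ^ 2 / 8) := by
  have hP : 0 < 1 - r ^ 2 := lt_of_lt_of_le hδ h1r
  have hc1a : (0:ℝ) < (2 * Real.pi) ^ (-(n : ℝ) / 2) :=
    Real.rpow_pos_of_pos (by positivity) _
  have hc1b : (0:ℝ) < δ ^ (-(n : ℝ) / 2) := Real.rpow_pos_of_pos hδ _
  have hc1 : (0:ℝ) < (2 * Real.pi) ^ (-(n : ℝ) / 2) * δ ^ (-(n : ℝ) / 2)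
      * Real.exp (‖x‖ ^ 2 / 2) := by positivity
  have ha : (0:ℝ) ≤ (n : ℝ) / δ + ‖x‖ ^ 2 / δ + ‖x‖ ^ 2 / δ ^ 2 := by
    have h1 := div_nonneg (Nat.cast_nonneg (α := ℝ) n) hδ.le
    have h2 := div_nonneg (sq_nonneg ‖x‖) hδ.le
    have h3 := div_nonneg (sq_nonneg ‖x‖) (sq_nonneg δ)
    linarith
  have hb : (0:ℝ) ≤ ‖x‖ / δ + 2 * ‖x‖ / δ ^ 2 := by
    have h1 := div_nonneg (norm_nonneg x) hδ.le
    have h2 := div_nonneg (mul_nonneg (by norm_num : (0:ℝ) ≤ 2) (norm_nonneg x)) (sq_nonneg δ)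
    linarith
  have hcc : (0:ℝ) ≤ 1 / δ ^ 2 := by positivity
  have hD : |D n x r z| = G n x r z * |W n x r z| := by
    unfold D
    rw [abs_mul, abs_of_nonneg (G_nonneg n x hP z)]
  rw [hD]
  calc G n x r z * |W n x r z|
      ≤ ((2 * Real.pi) ^ (-(n : ℝ) / 2) * δ ^ (-(n : ℝ) / 2) * Real.exp (‖x‖ ^ 2 / 2)
          * Real.exp (-‖z‖ ^ 2 / 4)) *
        (((n : ℝ) / δ + ‖x‖ ^ 2 / δ + ‖x‖ ^ 2 / δ ^ 2)
          + (‖x‖ / δ + 2 * ‖x‖ / δ ^ 2) * ‖z‖ + (1 / δ ^ 2) * ‖z‖ ^ 2) := by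
        apply mul_le_mul (G_bound n x hδ h1r z) (W_abs_bound n x hδ h1r z) (abs_nonneg _)
        positivity
    _ = ((2 * Real.pi) ^ (-(n : ℝ) / 2) * δ ^ (-(n : ℝ) / 2) * Real.exp (‖x‖ ^ 2 / 2)) *
        ((((n : ℝ) / δ + ‖x‖ ^ 2 / δ + ‖x‖ ^ 2 / δ ^ 2)
          + (‖x‖ / δ + 2 * ‖x‖ / δ ^ 2) * ‖z‖ + (1 / δ ^ 2) * ‖z‖ ^ 2)
          * Real.exp (-‖z‖ ^ 2 / 4)) := by ring
    _ ≤ ((2 * Real.pi) ^ (-(n : ℝ) / 2) * δ ^ (-(n : ℝ) / 2) * Real.exp (‖x‖ ^ 2 / 2)) *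
        ((((n : ℝ) / δ + ‖x‖ ^ 2 / δ + ‖x‖ ^ 2 / δ ^ 2)
          + 3 * (‖x‖ / δ + 2 * ‖x‖ / δ ^ 2) + 8 * (1 / δ ^ 2)) * Real.exp (-‖z‖ ^ 2 / 8)) :=
        mul_le_mul_of_nonneg_left (poly_gauss ha hb hcc (norm_nonneg z)) hc1.le
    _ = Cb n x δ * Real.exp (-‖z‖ ^ 2 / 8) := by unfold Cb; ring

lemma integrable_gaussian' (n : ℕ) {b : ℝ} (hb : 0 < b) (K : ℝ) :
    Integrable (fun z : EuclideanSpace ℝ (Fin n) => K * Real.exp (-‖z‖ ^ 2 / b)) volume := by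
  have hb' : (0:ℝ) < 1 / b := by positivity
  have h := integrable_gaussian n hb'
  have h2 := h.const_mul K
  refine h2.congr (Filter.Eventually.of_forall fun z => ?_)
  simp only
  congr 2
  ring

lemma G_cont (n : ℕ) (x : EuclideanSpace ℝ (Fin n)) (r : ℝ) :
    Continuous (fun z => G n x r z) := by
  unfold G
  exact continuous_const.mul (continuous_const.mul
    ((((continuous_id.sub continuous_const).norm.pow 2).neg.div_const _).rexp))

lemma W_cont (n : ℕ) (x : EuclideanSpace ℝ (Fin n)) (r : ℝ) :
    Continuous (fun z => W n x r z) := by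
  unfold W
  have h1 : Continuous fun z : EuclideanSpace ℝ (Fin n) => (inner ℝ x (z - r • x) : ℝ) :=
    Continuous.inner continuous_const (continuous_id.sub continuous_const)
  have h2 : Continuous fun z : EuclideanSpace ℝ (Fin n) => ‖z - r • x‖ ^ 2 :=
    (continuous_id.sub continuous_const).norm.pow 2
  continuity

lemma G_subst (n : ℕ) (x : EuclideanSpace ℝ (Fin n)) {r : ℝ} (hP : 0 < 1 - r ^ 2)
    (y : EuclideanSpace ℝ (Fin n)) :
    G n x r (r • x + Real.sqrt (1 - r ^ 2) • y)
      = (Real.sqrt (1 - r ^ 2) ^ n)⁻¹ * gphi n y := by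
  have hs : 0 < Real.sqrt (1 - r ^ 2) := Real.sqrt_pos.2 hP
  have hss : Real.sqrt (1 - r ^ 2) ^ 2 = 1 - r ^ 2 := Real.sq_sqrt hP.le
  unfold G gphi
  have hnorm : ‖(r • x + Real.sqrt (1 - r ^ 2) • y) - r • x‖ ^ 2 = (1 - r ^ 2) * ‖y‖ ^ 2 := by
    rw [add_sub_cancel_left, norm_smul, Real.norm_eq_abs, abs_of_pos hs, mul_pow, hss]
  rw [hnorm]
  have hA : (1 - r ^ 2) ^ (-(n : ℝ) / 2) = (Real.sqrt (1 - r ^ 2) ^ n)⁻¹ := by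
    have h1 : (Real.sqrt (1 - r ^ 2) ^ n) = (1 - r ^ 2) ^ ((n : ℝ) / 2) := by
      rw [Real.sqrt_eq_rpow, ← Real.rpow_natCast ((1 - r ^ 2) ^ ((1:ℝ) / 2)) n,
        ← Real.rpow_mul hP.le]
      congr 1
      ring
    rw [h1, ← Real.rpow_neg hP.le]
    congr 1
    ring
  rw [hA]
  have hexp : -((1 - r ^ 2) * ‖y‖ ^ 2) / (2 * (1 - r ^ 2)) = -‖y‖ ^ 2 / 2 := by
    field_simp
  rw [hexp]
  ring

lemma OU_eq (n : ℕ) (f : EuclideanSpace ℝ (Fin n) → ℝ) (x : EuclideanSpace ℝ (Fin n))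
    {r : ℝ} (hP : 0 < 1 - r ^ 2) :
    OU n r f x = ∫ z, f z * G n x r z := by
  have hs : 0 < Real.sqrt (1 - r ^ 2) := Real.sqrt_pos.2 hP
  rw [OU, integral_gauss,
    integral_shift_smul (r • x) hs (fun z => f z * G n x r z), ← integral_smul]
  congr 1
  funext y
  rw [G_subst n x hP y, smul_eq_mul, smul_eq_mul]
  have hsn : Real.sqrt (1 - r ^ 2) ^ n ≠ 0 := by positivity
  field_simp

lemma gphi_norm_bound (n : ℕ) (y : EuclideanSpace ℝ (Fin n)) :
    gphi n y * ‖y‖ ≤ 3 * (2 * Real.pi) ^ (-(n : ℝ) / 2) * Real.exp (-‖y‖ ^ 2 / 8) := by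
  have hc0 : (0:ℝ) < (2 * Real.pi) ^ (-(n : ℝ) / 2) :=
    Real.rpow_pos_of_pos (by positivity) _
  have h1 : Real.exp (-‖y‖ ^ 2 / 2) ≤ Real.exp (-‖y‖ ^ 2 / 4) := by
    apply Real.exp_le_exp.2
    nlinarith [sq_nonneg ‖y‖]
  have h2 := poly_gauss (le_refl (0:ℝ)) (zero_le_one) (le_refl (0:ℝ)) (norm_nonneg y)
  calc gphi n y * ‖y‖
      = (2 * Real.pi) ^ (-(n : ℝ) / 2) * (Real.exp (-‖y‖ ^ 2 / 2) * ‖y‖) := by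
        unfold gphi; ring
    _ ≤ (2 * Real.pi) ^ (-(n : ℝ) / 2) * (Real.exp (-‖y‖ ^ 2 / 4) * ‖y‖) :=
        mul_le_mul_of_nonneg_left (mul_le_mul_of_nonneg_right h1 (norm_nonneg y)) hc0.le
    _ = (2 * Real.pi) ^ (-(n : ℝ) / 2) *
        ((0 + 1 * ‖y‖ + 0 * ‖y‖ ^ 2) * Real.exp (-‖y‖ ^ 2 / 4)) := by ring
    _ ≤ (2 * Real.pi) ^ (-(n : ℝ) / 2) *
        ((0 + 3 * 1 + 8 * 0) * Real.exp (-‖y‖ ^ 2 / 8)) :=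
        mul_le_mul_of_nonneg_left h2 hc0.le
    _ = 3 * (2 * Real.pi) ^ (-(n : ℝ) / 2) * Real.exp (-‖y‖ ^ 2 / 8) := by ring

lemma gphi_sum_bound (n : ℕ) (y : EuclideanSpace ℝ (Fin n)) :
    gphi n y * ((n : ℝ) + ‖y‖ ^ 2)
      ≤ ((n : ℝ) + 8) * (2 * Real.pi) ^ (-(n : ℝ) / 2) * Real.exp (-‖y‖ ^ 2 / 8) := by
  have hc0 : (0:ℝ) < (2 * Real.pi) ^ (-(n : ℝ) / 2) :=
    Real.rpow_pos_of_pos (by positivity) _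
  have h1 : Real.exp (-‖y‖ ^ 2 / 2) ≤ Real.exp (-‖y‖ ^ 2 / 4) := by
    apply Real.exp_le_exp.2
    nlinarith [sq_nonneg ‖y‖]
  have h2 := poly_gauss (Nat.cast_nonneg (α := ℝ) n) (le_refl (0:ℝ)) (zero_le_one)
    (norm_nonneg y)
  calc gphi n y * ((n : ℝ) + ‖y‖ ^ 2)
      = (2 * Real.pi) ^ (-(n : ℝ) / 2) * (Real.exp (-‖y‖ ^ 2 / 2) * ((n : ℝ) + ‖y‖ ^ 2)) := by
        unfold gphi; ring
    _ ≤ (2 * Real.pi) ^ (-(n : ℝ) / 2) * (Real.exp (-‖y‖ ^ 2 / 4) * ((n : ℝ) + ‖y‖ ^ 2)) := by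
        apply mul_le_mul_of_nonneg_left _ hc0.le
        apply mul_le_mul_of_nonneg_right h1
        positivity
    _ = (2 * Real.pi) ^ (-(n : ℝ) / 2) *
        (((n : ℝ) + 0 * ‖y‖ + 1 * ‖y‖ ^ 2) * Real.exp (-‖y‖ ^ 2 / 4)) := by ring
    _ ≤ (2 * Real.pi) ^ (-(n : ℝ) / 2) *
        (((n : ℝ) + 3 * 0 + 8 * 1) * Real.exp (-‖y‖ ^ 2 / 8)) :=
        mul_le_mul_of_nonneg_left h2 hc0.le
    _ = ((n : ℝ) + 8) * (2 * Real.pi) ^ (-(n : ℝ) / 2) * Real.exp (-‖y‖ ^ 2 / 8) := by ring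

lemma sum_one_sub_sq (n : ℕ) (y : EuclideanSpace ℝ (Fin n)) :
    (∑ i, (1 - y i ^ 2)) = (n : ℝ) - ‖y‖ ^ 2 := by
  have hn : ‖y‖ ^ 2 = ∑ i, y i ^ 2 := by
    rw [EuclideanSpace.norm_eq,
      Real.sq_sqrt (Finset.sum_nonneg fun i _ => sq_nonneg _)]
    simp [Real.norm_eq_abs, sq_abs]
  rw [Finset.sum_sub_distrib, Finset.sum_const, Finset.card_univ, Fintype.card_fin,
    nsmul_eq_mul, mul_one, hn]

end OUaux

set_option maxHeartbeats 1000000 in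
open OUaux in
theorem hasDerivAt_OU (n : ℕ) (hn : 1 ≤ n) (f : EuclideanSpace ℝ (Fin n) → ℝ)
    (hmeas : Measurable f) (hbdd : ∃ M : ℝ, ∀ y, |f y| ≤ M)
    (x : EuclideanSpace ℝ (Fin n)) (ρ : ℝ) (hρ : ρ ∈ Set.Ioo (-1 : ℝ) 1) :
    HasDerivAt (fun r => OU n r f x)
      ((1 / Real.sqrt (1 - ρ ^ 2)) *
        ((inner ℝ x (∫ y, f (ρ • x + Real.sqrt (1 - ρ ^ 2) • y) • y ∂(gauss n)) : ℝ)
          + (ρ / Real.sqrt (1 - ρ ^ 2)) *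
            ∫ y, (∑ i, (1 - (y i) ^ 2)) * f (ρ • x + Real.sqrt (1 - ρ ^ 2) • y) ∂(gauss n))) ρ := by
  obtain ⟨M, hM⟩ := hbdd
  have hM0 : 0 ≤ M := le_trans (abs_nonneg _) (hM 0)
  obtain ⟨hρ1, hρ2⟩ := hρ
  have hP : 0 < 1 - ρ ^ 2 := by nlinarith
  set s : ℝ := Real.sqrt (1 - ρ ^ 2) with hsdef
  have hs : 0 < s := Real.sqrt_pos.2 hP
  have hss : s ^ 2 = 1 - ρ ^ 2 := Real.sq_sqrt hP.le
  have hsn : (s : ℝ) ^ n ≠ 0 := by positivity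
  set m : ℝ := max ((1 + ρ) / 2) ((1 - ρ) / 2) with hmdef
  have hm0 : 0 ≤ m := le_trans (by linarith) (le_max_left _ _)
  have hm1 : m < 1 := max_lt (by linarith) (by linarith)
  set δ : ℝ := 1 - m ^ 2 with hδdef
  have hδ : 0 < δ := by nlinarith
  set ε : ℝ := min (1 - ρ) (ρ + 1) / 2 with hεdef
  have hεpos : 0 < ε := by
    have h1 : 0 < min (1 - ρ) (ρ + 1) := lt_min (by linarith) (by linarith)
    rw [hεdef]; linarith
  have hδr : ∀ r ∈ Metric.ball ρ ε, δ ≤ 1 - r ^ 2 := by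
    intro r hr
    rw [Metric.mem_ball, Real.dist_eq] at hr
    have h1 := (abs_lt.1 hr).1
    have h2 := (abs_lt.1 hr).2
    have hεa : ε ≤ (1 - ρ) / 2 := by
      rw [hεdef]
      have := min_le_left (1 - ρ) (ρ + 1)
      linarith
    have hεb : ε ≤ (ρ + 1) / 2 := by
      rw [hεdef]
      have := min_le_right (1 - ρ) (ρ + 1)
      linarith
    have hmaxl := le_max_left ((1 + ρ) / 2) ((1 - ρ) / 2)
    have hmaxr := le_max_right ((1 + ρ) / 2) ((1 - ρ) / 2)
    have hr2 : r ^ 2 ≤ m ^ 2 := sq_le_sq' (by rw [hmdef]; linarith) (by rw [hmdef]; linarith)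
    rw [hδdef]; linarith
  have hballeps : ∀ r ∈ Metric.ball ρ ε, 0 < 1 - r ^ 2 := fun r hr =>
    lt_of_lt_of_le hδ (hδr r hr)
  have hρball : ρ ∈ Metric.ball ρ ε := Metric.mem_ball_self hεpos
  have hδρ : δ ≤ 1 - ρ ^ 2 := hδr ρ hρball
  have hGmeas : ∀ r : ℝ, AEStronglyMeasurable (fun z => f z * G n x r z) volume :=
    fun r => (hmeas.mul (G_cont n x r).measurable).aestronglyMeasurable
  have hDmeasρ : AEStronglyMeasurable (fun z => f z * D n x ρ z) volume := by
    have hD : Measurable (fun z => D n x ρ z) := by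
      unfold OUaux.D
      exact ((G_cont n x ρ).mul (W_cont n x ρ)).measurable
    exact (hmeas.mul hD).aestronglyMeasurable
  have hFint : Integrable (fun z => f z * G n x ρ z) volume := by
    have h1 : (0:ℝ) < (2 * Real.pi) ^ (-(n : ℝ) / 2) := Real.rpow_pos_of_pos (by positivity) _
    have h2 : (0:ℝ) < δ ^ (-(n : ℝ) / 2) := Real.rpow_pos_of_pos hδ _
    have h4 : (0:ℝ) < 4 := by norm_num
    apply Integrable.mono (integrable_gaussian' n h4
      (M * ((2 * Real.pi) ^ (-(n : ℝ) / 2) * δ ^ (-(n : ℝ) / 2) * Real.exp (‖x‖ ^ 2 / 2))))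
      (hGmeas ρ)
    refine Filter.Eventually.of_forall fun z => ?_
    rw [Real.norm_eq_abs, Real.norm_eq_abs, abs_mul,
      abs_of_nonneg (by positivity : (0:ℝ) ≤ M * ((2 * Real.pi) ^ (-(n : ℝ) / 2)
        * δ ^ (-(n : ℝ) / 2) * Real.exp (‖x‖ ^ 2 / 2)) * Real.exp (-‖z‖ ^ 2 / 4))]
    rw [abs_of_nonneg (G_nonneg n x hP z)]
    calc |f z| * G n x ρ z
        ≤ M * ((2 * Real.pi) ^ (-(n : ℝ) / 2) * δ ^ (-(n : ℝ) / 2)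
            * Real.exp (‖x‖ ^ 2 / 2) * Real.exp (-‖z‖ ^ 2 / 4)) :=
          mul_le_mul (hM z) (G_bound n x hδ hδρ z) (G_nonneg n x hP z) hM0
      _ = M * ((2 * Real.pi) ^ (-(n : ℝ) / 2) * δ ^ (-(n : ℝ) / 2)
            * Real.exp (‖x‖ ^ 2 / 2)) * Real.exp (-‖z‖ ^ 2 / 4) := by ring
  have hbint : Integrable (fun z : EuclideanSpace ℝ (Fin n) =>
      (M * Cb n x δ) * Real.exp (-‖z‖ ^ 2 / 8)) volume :=
    integrable_gaussian' n (by norm_num) _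
  have key := hasDerivAt_integral_of_dominated_loc_of_deriv_le (μ := volume) (𝕜 := ℝ)
    (F := fun r z => f z * G n x r z) (F' := fun r z => f z * D n x r z) (x₀ := ρ)
    (bound := fun z => (M * Cb n x δ) * Real.exp (-‖z‖ ^ 2 / 8))
    (Metric.ball_mem_nhds ρ hεpos) (Filter.Eventually.of_forall hGmeas) hFint hDmeasρ
    (Filter.Eventually.of_forall fun z => ?_) hbint
    (Filter.Eventually.of_forall fun z => ?_)
  rotate_left
  · -- bound
    intro r hr
    show ‖f z * D n x r z‖ ≤ M * Cb n x δ * Real.exp (-‖z‖ ^ 2 / 8)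
    rw [Real.norm_eq_abs, abs_mul, mul_assoc]
    exact mul_le_mul (hM z) (D_bound n x hδ (hδr r hr) z) (abs_nonneg _) hM0
  · -- differentiability
    intro r hr
    have hPr : 0 < 1 - r ^ 2 := hballeps r hr
    have hr1 : -1 < r := by nlinarith
    have hr2 : r < 1 := by nlinarith
    exact (hasDerivAt_G n x hr1 hr2 z).const_mul (f z)
  obtain ⟨-, hderiv⟩ := key
  have hev : (fun r => OU n r f x) =ᶠ[nhds ρ] (fun r => ∫ z, f z * G n x r z) := by
    filter_upwards [(isOpen_Ioo (a := (-1:ℝ)) (b := 1)).mem_nhds ⟨hρ1, hρ2⟩] with r hr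
    exact OU_eq n f x (by nlinarith [hr.1, hr.2])
  have hfinal := hderiv.congr_of_eventuallyEq hev
  refine hfinal.congr_deriv (Eq.symm ?_)
  -- identification of the derivative value
  have haff : Measurable fun y : EuclideanSpace ℝ (Fin n) => ρ • x + s • y :=
    (measurable_id.const_smul s).const_add (ρ • x)
  have hfm : Measurable fun y => f (ρ • x + s • y) := hmeas.comp haff
  have hc0 : (0:ℝ) < (2 * Real.pi) ^ (-(n : ℝ) / 2) := Real.rpow_pos_of_pos (by positivity) _
  -- integrability of the pieces
  have hg1int : Integrable (fun y => gphi n y * (f (ρ • x + s • y) * (inner ℝ x y : ℝ))) volume := by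
    apply Integrable.mono (integrable_gaussian' n (by norm_num : (0:ℝ) < 8)
      (M * ‖x‖ * (3 * (2 * Real.pi) ^ (-(n : ℝ) / 2))))
    · exact ((gphi_cont n).measurable.mul (hfm.mul
        (Continuous.inner continuous_const continuous_id).measurable)).aestronglyMeasurable
    refine Filter.Eventually.of_forall fun y => ?_
    rw [Real.norm_eq_abs, Real.norm_eq_abs, abs_mul, abs_mul,
      abs_of_nonneg (gphi_nonneg n y),
      abs_of_nonneg (by positivity : (0:ℝ) ≤ M * ‖x‖ * (3 * (2 * Real.pi) ^ (-(n : ℝ) / 2))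
        * Real.exp (-‖y‖ ^ 2 / 8))]
    calc gphi n y * (|f (ρ • x + s • y)| * |(inner ℝ x y : ℝ)|)
        ≤ gphi n y * (M * (‖x‖ * ‖y‖)) := by
          apply mul_le_mul_of_nonneg_left _ (gphi_nonneg n y)
          exact mul_le_mul (hM _) (abs_real_inner_le_norm x y) (abs_nonneg _) hM0
      _ = (M * ‖x‖) * (gphi n y * ‖y‖) := by ring
      _ ≤ (M * ‖x‖) * (3 * (2 * Real.pi) ^ (-(n : ℝ) / 2) * Real.exp (-‖y‖ ^ 2 / 8)) := by
          apply mul_le_mul_of_nonneg_left (gphi_norm_bound n y)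
          positivity
      _ = M * ‖x‖ * (3 * (2 * Real.pi) ^ (-(n : ℝ) / 2)) * Real.exp (-‖y‖ ^ 2 / 8) := by ring
  have hg2eq : (fun y : EuclideanSpace ℝ (Fin n) =>
        gphi n y * ((∑ i, (1 - y i ^ 2)) * f (ρ • x + s • y)))
      = fun y => gphi n y * (((n : ℝ) - ‖y‖ ^ 2) * f (ρ • x + s • y)) := by
    funext y
    rw [sum_one_sub_sq]
  have hg2int : Integrable (fun y => gphi n y
      * ((∑ i, (1 - y i ^ 2)) * f (ρ • x + s • y))) volume := by
    rw [hg2eq]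
    apply Integrable.mono (integrable_gaussian' n (by norm_num : (0:ℝ) < 8)
      (M * (((n : ℝ) + 8) * (2 * Real.pi) ^ (-(n : ℝ) / 2))))
    · exact ((gphi_cont n).measurable.mul
        (((continuous_const.sub (continuous_norm.pow 2)).measurable).mul hfm)).aestronglyMeasurable
    refine Filter.Eventually.of_forall fun y => ?_
    rw [Real.norm_eq_abs, Real.norm_eq_abs, abs_mul, abs_mul,
      abs_of_nonneg (gphi_nonneg n y),
      abs_of_nonneg (by positivity : (0:ℝ) ≤ M * (((n : ℝ) + 8)
        * (2 * Real.pi) ^ (-(n : ℝ) / 2)) * Real.exp (-‖y‖ ^ 2 / 8))]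
    have habs : |(n : ℝ) - ‖y‖ ^ 2| ≤ (n : ℝ) + ‖y‖ ^ 2 := by
      rw [abs_le]
      constructor <;> nlinarith [sq_nonneg ‖y‖, Nat.cast_nonneg (α := ℝ) n]
    calc gphi n y * (|(n : ℝ) - ‖y‖ ^ 2| * |f (ρ • x + s • y)|)
        ≤ gphi n y * (((n : ℝ) + ‖y‖ ^ 2) * M) := by
          apply mul_le_mul_of_nonneg_left _ (gphi_nonneg n y)
          exact mul_le_mul habs (hM _) (abs_nonneg _) (by positivity)
      _ = M * (gphi n y * ((n : ℝ) + ‖y‖ ^ 2)) := by ring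
      _ ≤ M * (((n : ℝ) + 8) * (2 * Real.pi) ^ (-(n : ℝ) / 2) * Real.exp (-‖y‖ ^ 2 / 8)) :=
          mul_le_mul_of_nonneg_left (gphi_sum_bound n y) hM0
      _ = M * (((n : ℝ) + 8) * (2 * Real.pi) ^ (-(n : ℝ) / 2)) * Real.exp (-‖y‖ ^ 2 / 8) := by
          ring
  have hJ : Integrable (fun y => f (ρ • x + s • y) • y) (gauss n) := by
    rw [integrable_gauss_iff]
    apply Integrable.mono (integrable_gaussian' n (by norm_num : (0:ℝ) < 8)
      (M * (3 * (2 * Real.pi) ^ (-(n : ℝ) / 2))))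
    · exact ((gphi_cont n).measurable.smul (hfm.smul measurable_id')).aestronglyMeasurable
    refine Filter.Eventually.of_forall fun y => ?_
    rw [norm_smul, norm_smul, Real.norm_eq_abs, Real.norm_eq_abs, Real.norm_eq_abs,
      abs_of_nonneg (gphi_nonneg n y),
      abs_of_nonneg (by positivity : (0:ℝ) ≤ M * (3 * (2 * Real.pi) ^ (-(n : ℝ) / 2))
        * Real.exp (-‖y‖ ^ 2 / 8))]
    calc gphi n y * (|f (ρ • x + s • y)| * ‖y‖)
        ≤ gphi n y * (M * ‖y‖) := by
          apply mul_le_mul_of_nonneg_left _ (gphi_nonneg n y)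
          exact mul_le_mul_of_nonneg_right (hM _) (norm_nonneg y)
      _ = M * (gphi n y * ‖y‖) := by ring
      _ ≤ M * (3 * (2 * Real.pi) ^ (-(n : ℝ) / 2) * Real.exp (-‖y‖ ^ 2 / 8)) :=
          mul_le_mul_of_nonneg_left (gphi_norm_bound n y) hM0
      _ = M * (3 * (2 * Real.pi) ^ (-(n : ℝ) / 2)) * Real.exp (-‖y‖ ^ 2 / 8) := by ring
  -- pointwise substitution identity
  have hDsub : ∀ y, f (ρ • x + s • y) * D n x ρ (ρ • x + s • y)
      = (s ^ n)⁻¹ * (s⁻¹ * (gphi n y * (f (ρ • x + s • y) * (inner ℝ x y : ℝ))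
          + (ρ / s) * (gphi n y * ((∑ i, (1 - y i ^ 2)) * f (ρ • x + s • y))))) := by
    intro y
    have hG := G_subst n x hP y
    rw [← hsdef] at hG
    unfold OUaux.D OUaux.W
    rw [hG, add_sub_cancel_left, real_inner_smul_right, norm_smul, Real.norm_eq_abs,
      abs_of_pos hs, mul_pow, sum_one_sub_sq, ← hss]
    field_simp
    ring
  -- the integral identity
  have hinner : (inner ℝ x (∫ y, f (ρ • x + s • y) • y ∂(gauss n)) : ℝ)
      = ∫ y, gphi n y * (f (ρ • x + s • y) * (inner ℝ x y : ℝ)) := by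
    rw [← integral_inner hJ x]
    rw [integral_gauss (fun y => (inner ℝ x (f (ρ • x + s • y) • y) : ℝ))]
    congr 1
    funext y
    rw [real_inner_smul_right, smul_eq_mul]
  have hI2 : (∫ y, (∑ i, (1 - y i ^ 2)) * f (ρ • x + s • y) ∂(gauss n))
      = ∫ y, gphi n y * ((∑ i, (1 - y i ^ 2)) * f (ρ • x + s • y)) := by
    rw [integral_gauss (fun y => (∑ i, (1 - y i ^ 2)) * f (ρ • x + s • y))]
    congr 1
  calc (1 / s) * ((inner ℝ x (∫ y, f (ρ • x + s • y) • y ∂(gauss n)) : ℝ)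
        + (ρ / s) * ∫ y, (∑ i, (1 - y i ^ 2)) * f (ρ • x + s • y) ∂(gauss n))
      = (1 / s) * ((∫ y, gphi n y * (f (ρ • x + s • y) * (inner ℝ x y : ℝ)))
        + (ρ / s) * ∫ y, gphi n y * ((∑ i, (1 - y i ^ 2)) * f (ρ • x + s • y))) := by
        rw [hinner, hI2]
    _ = (s ^ n) • ∫ y, (s ^ n)⁻¹ * (s⁻¹ * (gphi n y * (f (ρ • x + s • y) * (inner ℝ x y : ℝ))
          + (ρ / s) * (gphi n y * ((∑ i, (1 - y i ^ 2)) * f (ρ • x + s • y))))) := by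
        rw [integral_const_mul, integral_const_mul,
          integral_add hg1int (hg2int.const_mul (ρ / s)), integral_const_mul, smul_eq_mul]
        field_simp
    _ = (s ^ n) • ∫ y, f (ρ • x + s • y) * D n x ρ (ρ • x + s • y) := by
        congr 1
        exact integral_congr_ae (Filter.Eventually.of_forall fun y => (hDsub y).symm)
    _ = ∫ z, f z * D n x ρ z :=
        (integral_shift_smul (ρ • x) hs (fun z => f z * D n x ρ z)).symm
end

section
/- For every measurable set A ⊆ ℝⁿ, ‖∫_A x dγ_n(x)‖²_{ℓ²} ≤ 1/(2π), with equality if and only if, up to a γ_n-null set, A is a half-space whose boundary hyperplane contains the origin of ℝⁿ. -/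
open MeasureTheory

open Real Set Filter Topology
open scoped ENNReal NNReal

noncomputable def phi (t : ℝ) : ℝ := (2 * π) ^ (-(1:ℝ)/2) * Real.exp (-t^2/2)

lemma phi_eq : phi = fun t => (Real.sqrt (2*π))⁻¹ * Real.exp (-(1/2) * t^2) := by
  have h2π : (0:ℝ) ≤ 2 * π := by positivity
  have hc : (2*π) ^ (-(1:ℝ)/2) = (Real.sqrt (2*π))⁻¹ := by
    rw [Real.sqrt_eq_rpow, ← Real.rpow_neg h2π]
    norm_num
  funext t
  rw [phi, hc]
  congr 1
  ring

lemma phi_nonneg (t : ℝ) : 0 ≤ phi t := by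
  rw [phi_eq]; positivity

lemma continuous_phi : Continuous phi := by
  unfold phi; continuity

lemma integrable_phi : Integrable phi := by
  rw [phi_eq]
  exact (integrable_exp_neg_mul_sq (by norm_num : (0:ℝ) < 1/2)).const_mul _

lemma integral_phi : ∫ t, phi t = 1 := by
  rw [phi_eq]
  rw [integral_const_mul, integral_gaussian]
  have h : π / (1/2) = 2 * π := by ring
  rw [h]
  have : Real.sqrt (2*π) ≠ 0 := by positivity
  field_simp

lemma integrable_mul_phi : Integrable (fun t => t * phi t) := by
  rw [phi_eq]
  have := (integrable_mul_exp_neg_mul_sq (by norm_num : (0:ℝ) < 1/2)).const_mul (Real.sqrt (2*π))⁻¹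
  convert this using 2 with t
  ring

lemma integrable_pos_phi : Integrable (fun t => max t 0 * phi t) := by
  refine integrable_mul_phi.abs.mono' ?_ ?_
  · exact ((continuous_id.max continuous_const).mul continuous_phi).aestronglyMeasurable
  · refine Filter.Eventually.of_forall fun t => ?_
    have h1 : |max t 0| ≤ |t| := by
      rcases le_total t 0 with h | h
      · rw [max_eq_right h]; simp
      · rw [max_eq_left h]
    simp only [Real.norm_eq_abs, abs_mul]
    gcongr

lemma integral_Ioi_mul_exp : ∫ r in Ioi (0:ℝ), r * Real.exp (-(1/2) * r^2) = 1 := by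
  have A : ∀ x : ℝ, HasDerivAt (fun y : ℝ => -Real.exp (-(1/2)*y^2))
      (x * Real.exp (-(1/2)*x^2)) x := by
    intro x
    refine (((hasDerivAt_pow 2 x).const_mul (-(1/2:ℝ))).exp).neg.congr_deriv ?_
    simp
    ring_nf
  have B : Tendsto (fun y : ℝ => -Real.exp (-(1/2)*y^2)) atTop (𝓝 (-0)) := by
    refine Tendsto.neg ?_
    exact Real.tendsto_exp_atBot.comp
      ((tendsto_pow_atTop two_ne_zero).const_mul_atTop_of_neg (by norm_num))
  have := integral_Ioi_of_hasDerivAt_of_tendsto' (a := (0:ℝ))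
    (f := fun y : ℝ => -Real.exp (-(1/2)*y^2))
    (f' := fun x : ℝ => x * Real.exp (-(1/2)*x^2))
    (fun x _ => A x)
    ((integrable_mul_exp_neg_mul_sq (by norm_num : (0:ℝ) < 1/2)).integrableOn) B
  rw [this]
  norm_num

lemma integral_pos_phi : ∫ t, max t 0 * phi t = (Real.sqrt (2*π))⁻¹ := by
  rw [← integral_add_compl (measurableSet_Ioi (a := (0:ℝ))) integrable_pos_phi, compl_Ioi]
  have h1 : ∫ t in Iic (0:ℝ), max t 0 * phi t = 0 := by
    rw [setIntegral_congr_fun measurableSet_Iic (g := fun _ => (0:ℝ))]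
    · simp
    · intro t ht
      simp only [mem_Iic] at ht
      simp [max_eq_right ht]
  have h2 : ∫ t in Ioi (0:ℝ), max t 0 * phi t = (Real.sqrt (2*π))⁻¹ := by
    rw [setIntegral_congr_fun measurableSet_Ioi
      (g := fun t => (Real.sqrt (2*π))⁻¹ * (t * Real.exp (-(1/2) * t^2)))]
    · rw [integral_const_mul, integral_Ioi_mul_exp, mul_one]
    · intro t ht
      simp only [mem_Ioi] at ht
      simp only [max_eq_left ht.le, phi_eq]
      ring
  rw [h1, h2, add_zero]

noncomputable def gaussD (n : ℕ) (x : EuclideanSpace ℝ (Fin n)) : ℝ :=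
  (2 * Real.pi) ^ (-(n : ℝ) / 2) * Real.exp (-‖x‖ ^ 2 / 2)

lemma gaussD_nonneg (n : ℕ) (x : EuclideanSpace ℝ (Fin n)) : 0 ≤ gaussD n x := by
  unfold gaussD
  positivity

lemma continuous_gaussD (n : ℕ) : Continuous (gaussD n) := by
  unfold gaussD
  continuity

lemma gauss_eq (n : ℕ) :
    gauss n = volume.withDensity (fun x => ((gaussD n x).toNNReal : ℝ≥0∞)) := rfl

/-- density is a product of 1-d densities -/
lemma gaussD_comp (n : ℕ) (y : Fin n → ℝ) :
    gaussD n ((MeasurableEquiv.toLp 2 (Fin n → ℝ)).symm.symm y) = ∏ i, phi (y i) := by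
  have h2π : (0:ℝ) ≤ 2 * π := by positivity
  have hnorm : ‖(MeasurableEquiv.toLp 2 (Fin n → ℝ)).symm.symm y‖ ^ 2 = ∑ i, (y i)^2 := by
    rw [MeasurableEquiv.symm_symm, MeasurableEquiv.coe_toLp]
    rw [EuclideanSpace.norm_eq, Real.sq_sqrt (by positivity)]
    simp [Real.norm_eq_abs, sq_abs]
  unfold gaussD phi
  rw [hnorm, Finset.prod_mul_distrib, Finset.prod_const]
  congr 1
  · have h : ((2*π) ^ (-(1:ℝ)/2)) ^ ((Finset.univ : Finset (Fin n)).card)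
        = (2*π) ^ (-(n:ℝ)/2) := by
      rw [Finset.card_univ, Fintype.card_fin, ← Real.rpow_natCast ((2*π) ^ (-(1:ℝ)/2)) n,
        ← Real.rpow_mul h2π]
      congr 1
      ring
    exact h.symm
  · rw [← Real.exp_sum]
    congr 1
    rw [← Finset.sum_div, ← Finset.sum_neg_distrib]

/-- transfer Bochner integrals to the pi space -/
lemma gauss_integral_eq (n : ℕ) {F : Type*} [NormedAddCommGroup F] [NormedSpace ℝ F]
    (g : EuclideanSpace ℝ (Fin n) → F) :
    ∫ x, g x ∂(gauss n)
      = ∫ y : Fin n → ℝ, (∏ i, phi (y i)) • g ((MeasurableEquiv.toLp 2 (Fin n → ℝ)).symm.symm y) := by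
  rw [gauss_eq, integral_withDensity_eq_integral_smul
    (by exact (continuous_gaussD n).measurable.real_toNNReal) g]
  rw [← ((EuclideanSpace.volume_preserving_symm_measurableEquiv_toLp (Fin n)).symm).integral_comp'
    (fun x => (gaussD n x).toNNReal • g x)]
  congr 1
  funext y
  rw [NNReal.smul_def, Real.coe_toNNReal _ (gaussD_nonneg _ _), gaussD_comp]

lemma gauss_integrable_iff (n : ℕ) {F : Type*} [NormedAddCommGroup F] [NormedSpace ℝ F]
    (g : EuclideanSpace ℝ (Fin n) → F) :
    Integrable g (gauss n)
      ↔ Integrable (fun y : Fin n → ℝ =>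
          (∏ i, phi (y i)) • g ((MeasurableEquiv.toLp 2 (Fin n → ℝ)).symm.symm y)) volume := by
  rw [gauss_eq, integrable_withDensity_iff_integrable_smul
    (by exact (continuous_gaussD n).measurable.real_toNNReal)]
  rw [← ((EuclideanSpace.volume_preserving_symm_measurableEquiv_toLp (Fin n)).symm).integrable_comp_emb
    (MeasurableEquiv.measurableEmbedding _)]
  constructor <;> intro h <;> [skip; skip] <;>
  · refine h.congr (Filter.Eventually.of_forall fun y => ?_)
    simp only [Function.comp]
    rw [NNReal.smul_def, Real.coe_toNNReal _ (gaussD_nonneg _ _), gaussD_comp]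

lemma gaussD_comp' (n : ℕ) :
    (gaussD n) ∘ ⇑(MeasurableEquiv.toLp 2 (Fin n → ℝ)).symm.symm
      = fun y : Fin n → ℝ => ∏ i, phi (y i) :=
  funext fun y => gaussD_comp n y

lemma integrable_gaussD (n : ℕ) : Integrable (gaussD n) volume := by
  rw [← MeasurePreserving.integrable_comp_emb
    ((EuclideanSpace.volume_preserving_symm_measurableEquiv_toLp (Fin n)).symm)
    (MeasurableEquiv.measurableEmbedding _), gaussD_comp' n]
  exact Integrable.fintype_prod (𝕜 := ℝ) (f := fun _ => phi) fun _ => integrable_phi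

lemma integral_gaussD (n : ℕ) : ∫ x, gaussD n x = 1 := by
  rw [← ((EuclideanSpace.volume_preserving_symm_measurableEquiv_toLp (Fin n)).symm).integral_comp'
    (gaussD n)]
  have : (fun y : Fin n → ℝ => gaussD n ((MeasurableEquiv.toLp 2 (Fin n → ℝ)).symm.symm y))
      = fun y => ∏ i, phi (y i) := funext fun y => gaussD_comp n y
  rw [this, volume_pi, integral_fintype_prod_eq_prod (fun _ => phi)]
  simp [integral_phi]

instance gauss_prob (n : ℕ) : IsProbabilityMeasure (gauss n) := by
  constructor
  rw [gauss_eq, withDensity_apply _ MeasurableSet.univ, setLIntegral_univ]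
  have h : ∀ x, ((gaussD n x).toNNReal : ℝ≥0∞) = ENNReal.ofReal (gaussD n x) := fun _ => rfl
  simp_rw [h]
  rw [← ofReal_integral_eq_lintegral_ofReal (integrable_gaussD n)
    (Filter.Eventually.of_forall (gaussD_nonneg n)), integral_gaussD]
  simp

lemma gauss_map (n : ℕ) (L : EuclideanSpace ℝ (Fin n) ≃ₗᵢ[ℝ] EuclideanSpace ℝ (Fin n)) :
    MeasurePreserving L (gauss n) (gauss n) := by
  refine ⟨L.continuous.measurable, ?_⟩
  ext s hs
  rw [Measure.map_apply L.continuous.measurable hs, gauss_eq,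
    withDensity_apply _ hs, withDensity_apply _ (hs.preimage L.continuous.measurable)]
  have hD : ∀ x, ((gaussD n x).toNNReal : ℝ≥0∞) = ((gaussD n (L x)).toNNReal : ℝ≥0∞) := by
    intro x
    simp only [gaussD, L.norm_map]
  have hkey := L.measurePreserving.setLIntegral_comp_preimage_emb
    (L.toHomeomorph.measurableEmbedding) (fun y => ((gaussD n y).toNNReal : ℝ≥0∞)) s
  rw [← hkey]
  exact lintegral_congr hD

lemma prod_factor {n : ℕ} (i : Fin n) (h : ℝ → ℝ) (y : Fin n → ℝ) :
    ∏ j, (if j = i then h (y j) else phi (y j))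
      = h (y i) * ∏ j ∈ Finset.univ.erase i, phi (y j) := by
  rw [← Finset.mul_prod_erase Finset.univ _ (Finset.mem_univ i), if_pos rfl]
  congr 1
  refine Finset.prod_congr rfl fun j hj => ?_
  rw [if_neg (Finset.ne_of_mem_erase hj)]

lemma gauss_smul_prod_eq {n : ℕ} (i : Fin n) (h : ℝ → ℝ) :
    (fun y : Fin n → ℝ =>
        (∏ j, phi (y j)) • h (((MeasurableEquiv.toLp 2 (Fin n → ℝ)).symm.symm y) i))
      = fun y : Fin n → ℝ => ∏ j, (fun j t => if j = i then h t * phi t else phi t) j (y j) := by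
  funext y
  have hy : ((MeasurableEquiv.toLp 2 (Fin n → ℝ)).symm.symm y) i = y i := rfl
  simp only [hy, smul_eq_mul]
  have : ∀ j, (if j = i then h (y j) * phi (y j) else phi (y j))
      = (if j = i then (fun t => h t * phi t) (y j) else phi (y j)) := fun j => rfl
  simp only [this]
  rw [prod_factor i (fun t => h t * phi t),
    ← Finset.mul_prod_erase Finset.univ (fun j => phi (y j)) (Finset.mem_univ i)]
  ring

lemma gauss_integrable_coord_fn {n : ℕ} (i : Fin n) (h : ℝ → ℝ)
    (hint : Integrable (fun t => h t * phi t)) :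
    Integrable (fun x : EuclideanSpace ℝ (Fin n) => h (x i)) (gauss n) := by
  rw [gauss_integrable_iff, gauss_smul_prod_eq i h]
  refine Integrable.fintype_prod (𝕜 := ℝ) (E := ℝ)
    (f := fun j t => if j = i then h t * phi t else phi t) fun j => ?_
  by_cases hj : j = i
  · simpa [hj] using hint
  · simpa [hj] using integrable_phi

lemma gauss_integral_coord_fn {n : ℕ} (i : Fin n) (h : ℝ → ℝ) :
    ∫ x, h (x i) ∂(gauss n) = ∫ t, h t * phi t := by
  rw [gauss_integral_eq, gauss_smul_prod_eq i h,
    volume_pi, integral_fintype_prod_eq_prod (fun j (t : ℝ) => if j = i then h t * phi t else phi t)]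
  rw [← Finset.mul_prod_erase Finset.univ _ (Finset.mem_univ i)]
  simp only [eq_self_iff_true, if_true]
  have : ∀ j ∈ Finset.univ.erase i,
      (∫ t : ℝ, if j = i then h t * phi t else phi t) = 1 := by
    intro j hj
    simp only [if_neg (Finset.ne_of_mem_erase hj)]
    exact integral_phi
  rw [Finset.prod_congr rfl this, Finset.prod_const_one, mul_one]

lemma gauss_integrable_coord {n : ℕ} (i : Fin n) :
    Integrable (fun x : EuclideanSpace ℝ (Fin n) => x i) (gauss n) :=
  gauss_integrable_coord_fn i (fun t => t) integrable_mul_phi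

lemma inner_eq_sum {n : ℕ} (x w : EuclideanSpace ℝ (Fin n)) :
    (inner ℝ x w : ℝ) = ∑ j, x j * w j := by
  rw [PiLp.inner_apply]
  simp [RCLike.inner_apply, conj_trivial, mul_comm]

lemma gauss_integrable_inner {n : ℕ} (w : EuclideanSpace ℝ (Fin n)) :
    Integrable (fun x => (inner ℝ x w : ℝ)) (gauss n) := by
  have h : (fun x : EuclideanSpace ℝ (Fin n) => (inner ℝ x w : ℝ))
      = fun x => ∑ j, x j * w j := funext fun x => inner_eq_sum x w
  rw [h]
  exact integrable_finset_sum _ fun j _ => (gauss_integrable_coord j).mul_const (w j)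

lemma gauss_integrable_id (n : ℕ) :
    Integrable (fun x : EuclideanSpace ℝ (Fin n) => x) (gauss n) := by
  have h : (fun x : EuclideanSpace ℝ (Fin n) => x)
      = fun x => ∑ i, (x i) • (EuclideanSpace.basisFun (Fin n) ℝ) i := by
    funext x
    have := (EuclideanSpace.basisFun (Fin n) ℝ).sum_repr x
    simp only [EuclideanSpace.basisFun_repr] at this
    exact this.symm
  rw [h]
  exact integrable_finset_sum _ fun i _ => (gauss_integrable_coord i).smul_const _

lemma gauss_hyperplane {n : ℕ} {u : EuclideanSpace ℝ (Fin n)} (hu : u ≠ 0) :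
    gauss n {x | (inner ℝ x u : ℝ) = 0} = 0 := by
  have hset : {x : EuclideanSpace ℝ (Fin n) | (inner ℝ x u : ℝ) = 0}
      = ((ℝ ∙ u)ᗮ : Submodule ℝ (EuclideanSpace ℝ (Fin n))) := by
    ext x
    simp only [mem_setOf_eq, SetLike.mem_coe,
      Submodule.mem_orthogonal_singleton_iff_inner_right]
    constructor
    · intro h; rw [real_inner_comm]; exact h
    · intro h; rw [real_inner_comm]; exact h
  have htop : ((ℝ ∙ u)ᗮ : Submodule ℝ (EuclideanSpace ℝ (Fin n))) ≠ ⊤ := by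
    intro h
    have hmem : u ∈ ((ℝ ∙ u)ᗮ : Submodule ℝ (EuclideanSpace ℝ (Fin n))) := h ▸ Submodule.mem_top
    have := hmem u (Submodule.mem_span_singleton_self u)
    rw [real_inner_self_eq_norm_sq] at this
    exact hu (by simpa using norm_eq_zero.mp (by nlinarith [norm_nonneg u]))
  have hvol : volume {x : EuclideanSpace ℝ (Fin n) | (inner ℝ x u : ℝ) = 0} = 0 := by
    rw [hset]
    exact Measure.addHaar_submodule volume _ htop
  rw [gauss_eq]
  exact withDensity_absolutelyContinuous volume _ hvol

lemma gauss_integrable_pos_inner {n : ℕ} (u : EuclideanSpace ℝ (Fin n)) :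
    Integrable (fun x => max (inner ℝ x u : ℝ) 0) (gauss n) :=
  (gauss_integrable_inner u).pos_part

lemma gauss_integral_pos_inner {n : ℕ} {u : EuclideanSpace ℝ (Fin n)} (hu : ‖u‖ = 1) :
    ∫ x, max (inner ℝ x u : ℝ) 0 ∂(gauss n) = (Real.sqrt (2*π))⁻¹ := by
  have hne : u ≠ 0 := by intro h; rw [h, norm_zero] at hu; exact one_ne_zero hu.symm
  obtain ⟨i⟩ : Nonempty (Fin n) := by
    rcases Nat.eq_zero_or_pos n with h | h
    · subst h; exact absurd (Subsingleton.elim u 0) hne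
    · exact ⟨⟨0, h⟩⟩
  set v : EuclideanSpace ℝ (Fin n) := EuclideanSpace.single i (1:ℝ) with hv_def
  have hv : ‖v‖ = 1 := by simp [hv_def, EuclideanSpace.norm_single]
  set L := Submodule.reflection (ℝ ∙ (u - v))ᗮ with hL_def
  have hLu : L u = v := Submodule.reflection_sub (by rw [hu, hv])
  have key : ∀ x : EuclideanSpace ℝ (Fin n), (inner ℝ x u : ℝ) = inner ℝ (L x) v := by
    intro x; rw [← hLu, LinearIsometryEquiv.inner_map_map]
  have hinner_v : ∀ x : EuclideanSpace ℝ (Fin n), (inner ℝ x v : ℝ) = x i := by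
    intro x
    rw [hv_def, EuclideanSpace.inner_single_right]
    simp
  calc ∫ x, max (inner ℝ x u : ℝ) 0 ∂(gauss n)
      = ∫ x, max (inner ℝ (L x) v : ℝ) 0 ∂(gauss n) := by simp_rw [key]
    _ = ∫ x, max (inner ℝ x v : ℝ) 0 ∂(gauss n) :=
        (gauss_map n L).integral_comp (L.toHomeomorph.measurableEmbedding)
          (fun x => max (inner ℝ x v : ℝ) 0)
    _ = ∫ x : EuclideanSpace ℝ (Fin n), max (x i) 0 ∂(gauss n) := by simp_rw [hinner_v]
    _ = ∫ t, max t 0 * phi t := gauss_integral_coord_fn i (fun t => max t 0)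
    _ = (Real.sqrt (2*π))⁻¹ := integral_pos_phi

lemma gauss_setIntegral_orth {n : ℕ} {u w : EuclideanSpace ℝ (Fin n)}
    (hw : (inner ℝ w u : ℝ) = 0) :
    ∫ x in {x | 0 ≤ (inner ℝ x u : ℝ)}, (inner ℝ x w : ℝ) ∂(gauss n) = 0 := by
  by_cases hw0 : w = 0
  · simp [hw0]
  set R := Submodule.reflection (ℝ ∙ w)ᗮ with hR
  have hRw : R w = -w := Submodule.reflection_orthogonalComplement_singleton_eq_neg w
  have hRu : R u = u := by
    refine Submodule.reflection_mem_subspace_eq_self ?_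
    rw [Submodule.mem_orthogonal_singleton_iff_inner_right]
    exact hw
  have hpre : ⇑R ⁻¹' {x | 0 ≤ (inner ℝ x u : ℝ)} = {x | 0 ≤ (inner ℝ x u : ℝ)} := by
    ext x
    simp only [mem_preimage, mem_setOf_eq]
    have : (inner ℝ (R x) u : ℝ) = inner ℝ x u := by
      conv_lhs => rw [← hRu]
      exact R.inner_map_map x u
    rw [this]
  have hcomp : ∀ x, (inner ℝ (R x) w : ℝ) = - inner ℝ x w := by
    intro x
    have h1 : (inner ℝ (R x) (R w) : ℝ) = inner ℝ x w := R.inner_map_map x w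
    rw [hRw, inner_neg_right] at h1
    linarith
  have hchg := (gauss_map n R).setIntegral_preimage_emb (R.toHomeomorph.measurableEmbedding)
      (fun x => (inner ℝ x w : ℝ)) {x | 0 ≤ (inner ℝ x u : ℝ)}
  rw [hpre] at hchg
  have h2 : ∫ x in {x | 0 ≤ (inner ℝ x u : ℝ)}, (inner ℝ (R x) w : ℝ) ∂(gauss n)
      = ∫ x in {x | 0 ≤ (inner ℝ x u : ℝ)}, -(inner ℝ x w : ℝ) ∂(gauss n) := by
    simp_rw [hcomp]
  rw [h2, integral_neg] at hchg
  linarith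

lemma measurableSet_halfspace {n : ℕ} (u : EuclideanSpace ℝ (Fin n)) :
    MeasurableSet {x | 0 ≤ (inner ℝ x u : ℝ)} := by
  have hc : Continuous fun x : EuclideanSpace ℝ (Fin n) => (inner ℝ x u : ℝ) :=
    continuous_id.inner continuous_const
  exact (isClosed_le continuous_const hc).measurableSet

lemma gauss_setIntegral_pos_inner {n : ℕ} {u : EuclideanSpace ℝ (Fin n)} (hu : ‖u‖ = 1) :
    ∫ x in {x | 0 ≤ (inner ℝ x u : ℝ)}, (inner ℝ x u : ℝ) ∂(gauss n) = (Real.sqrt (2*π))⁻¹ := by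
  set H := {x : EuclideanSpace ℝ (Fin n) | 0 ≤ (inner ℝ x u : ℝ)} with hH
  have hHmeas : MeasurableSet H := measurableSet_halfspace u
  have heq : ∫ x in H, (inner ℝ x u : ℝ) ∂(gauss n)
      = ∫ x in H, max (inner ℝ x u : ℝ) 0 ∂(gauss n) :=
    setIntegral_congr_fun hHmeas (fun x hx => (max_eq_left hx).symm)
  have hsplit := integral_add_compl hHmeas (gauss_integrable_pos_inner u)
  have hcompl : ∫ x in Hᶜ, max (inner ℝ x u : ℝ) 0 ∂(gauss n) = 0 := by
    rw [setIntegral_congr_fun hHmeas.compl (g := fun _ => (0:ℝ)), integral_zero]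
    intro x hx
    simp only [hH, mem_compl_iff, mem_setOf_eq, not_le] at hx
    exact max_eq_right hx.le
  rw [hcompl, add_zero] at hsplit
  rw [heq, hsplit, gauss_integral_pos_inner hu]

lemma gauss_inner_setIntegral {n : ℕ} {A : Set (EuclideanSpace ℝ (Fin n))}
    (w : EuclideanSpace ℝ (Fin n)) :
    (inner ℝ (∫ x in A, x ∂(gauss n)) w : ℝ) = ∫ x in A, (inner ℝ x w : ℝ) ∂(gauss n) := by
  rw [real_inner_comm, ← integral_inner ((gauss_integrable_id n).restrict) w]
  simp_rw [real_inner_comm]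

lemma gauss_setIntegral_halfspace {n : ℕ} {u : EuclideanSpace ℝ (Fin n)} (hu : ‖u‖ = 1) :
    ∫ x in {x | 0 ≤ (inner ℝ x u : ℝ)}, x ∂(gauss n) = (Real.sqrt (2*π))⁻¹ • u := by
  set H := {x : EuclideanSpace ℝ (Fin n) | 0 ≤ (inner ℝ x u : ℝ)} with hH
  set m := ∫ x in H, x ∂(gauss n) with hm
  have h1 : (inner ℝ m u : ℝ) = (Real.sqrt (2*π))⁻¹ := by
    rw [hm, gauss_inner_setIntegral u, gauss_setIntegral_pos_inner hu]
  have h2 : m = (inner ℝ m u : ℝ) • u := by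
    set w := m - (inner ℝ m u : ℝ) • u with hw
    have hwu : (inner ℝ w u : ℝ) = 0 := by
      rw [hw, inner_sub_left, real_inner_smul_left, real_inner_self_eq_norm_sq, hu]
      ring
    have hiww : (inner ℝ w w : ℝ) = 0 := by
      have huw : (inner ℝ u w : ℝ) = 0 := by rw [real_inner_comm]; exact hwu
      calc (inner ℝ w w : ℝ)
          = inner ℝ m w - (inner ℝ m u : ℝ) * inner ℝ u w := by
            rw [hw, inner_sub_left, real_inner_smul_left]
        _ = 0 := by
            rw [huw, hm, gauss_inner_setIntegral w, gauss_setIntegral_orth hwu]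
            ring
    have : w = 0 := by rwa [inner_self_eq_zero] at hiww
    rw [hw, sub_eq_zero] at this
    exact this
  rw [h2, h1]

lemma gauss_key {n : ℕ} {A : Set (EuclideanSpace ℝ (Fin n))} (hA : MeasurableSet A)
    {u : EuclideanSpace ℝ (Fin n)} (hu : ‖u‖ = 1) :
    ∫ x in A, (inner ℝ x u : ℝ) ∂(gauss n) ≤ (Real.sqrt (2*π))⁻¹ ∧
    (∫ x in A, (inner ℝ x u : ℝ) ∂(gauss n) = (Real.sqrt (2*π))⁻¹ →
      gauss n (symmDiff A {x | 0 ≤ (inner ℝ x u : ℝ)}) = 0) := by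
  have hune : u ≠ 0 := by intro h; rw [h, norm_zero] at hu; exact one_ne_zero hu.symm
  set f : EuclideanSpace ℝ (Fin n) → ℝ := fun x => (inner ℝ x u : ℝ) with hf
  set fp : EuclideanSpace ℝ (Fin n) → ℝ := fun x => max (f x) 0 with hfp
  have hf_int : Integrable f (gauss n) := gauss_integrable_inner u
  have hfp_int : Integrable fp (gauss n) := gauss_integrable_pos_inner u
  have htot : ∫ x, fp x ∂(gauss n) = (Real.sqrt (2*π))⁻¹ := gauss_integral_pos_inner hu
  have step1 : ∫ x in A, f x ∂(gauss n) ≤ ∫ x in A, fp x ∂(gauss n) :=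
    setIntegral_mono hf_int.integrableOn hfp_int.integrableOn (fun x => le_max_left _ _)
  have step2 : ∫ x in A, fp x ∂(gauss n) ≤ ∫ x, fp x ∂(gauss n) :=
    setIntegral_le_integral hfp_int (Filter.Eventually.of_forall fun x => le_max_right _ _)
  refine ⟨step1.trans (step2.trans_eq htot), fun heq => ?_⟩
  set H := {x : EuclideanSpace ℝ (Fin n) | 0 ≤ (inner ℝ x u : ℝ)} with hH
  have e1 : ∫ x in A, f x ∂(gauss n) = ∫ x in A, fp x ∂(gauss n) :=
    le_antisymm step1 (by rw [heq]; exact step2.trans_eq htot)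
  have e2 : ∫ x in A, fp x ∂(gauss n) = ∫ x, fp x ∂(gauss n) := by
    rw [← e1, heq, htot]
  -- part (i) : A \ H is null
  have hi : gauss n (A \ H) = 0 := by
    have hsub : Integrable (fun x => fp x - f x) ((gauss n).restrict A) :=
      hfp_int.integrableOn.sub hf_int.integrableOn
    have hz : ∫ x in A, (fp x - f x) ∂(gauss n) = 0 := by
      rw [integral_sub hfp_int.integrableOn hf_int.integrableOn, ← e1, sub_self]
    have hae0 : (fun x => fp x - f x) =ᵐ[(gauss n).restrict A] 0 :=
      (integral_eq_zero_iff_of_nonneg_ae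
        (Filter.Eventually.of_forall fun x => sub_nonneg.2 (le_max_left _ _)) hsub).mp hz
    have hae : ∀ᵐ x ∂(gauss n), x ∈ A → 0 ≤ f x := by
      rw [← ae_restrict_iff' hA]
      refine hae0.mono fun x hx => ?_
      have : fp x = f x := by simpa [sub_eq_zero] using hx
      rw [hfp] at this
      exact max_eq_left_iff.mp this
    refine measure_mono_null (fun x hx => ?_) (ae_iff.mp hae)
    exact fun h => hx.2 (h hx.1)
  -- part (ii) : H \ A is null
  have hii : gauss n (H \ A) = 0 := by
    have hcompl : ∫ x in Aᶜ, fp x ∂(gauss n) = 0 := by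
      have := integral_add_compl hA hfp_int (f := fp)
      rw [e2] at this
      linarith
    have hae0 : fp =ᵐ[(gauss n).restrict Aᶜ] 0 :=
      (integral_eq_zero_iff_of_nonneg_ae
        (Filter.Eventually.of_forall fun x => le_max_right _ _) hfp_int.integrableOn).mp hcompl
    have hae : ∀ᵐ x ∂(gauss n), x ∈ Aᶜ → fp x = 0 := by
      rw [← ae_restrict_iff' hA.compl]
      exact hae0.mono fun x hx => hx
    have hsub : H \ A ⊆ {x | ¬(x ∈ Aᶜ → fp x = 0)} ∪ {x | f x = 0} := by
      intro x hx
      rcases eq_or_lt_of_le (show (0:ℝ) ≤ f x from hx.1) with h0 | h0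
      · exact Or.inr h0.symm
      · refine Or.inl fun h => ?_
        have := h hx.2
        rw [hfp] at this
        simp only [max_eq_left h0.le] at this
        exact absurd this (ne_of_gt h0)
    refine measure_mono_null hsub ?_
    refine le_antisymm ?_ zero_le
    refine (measure_union_le _ _).trans ?_
    rw [ae_iff.mp hae, gauss_hyperplane hune]
    simp
  have : symmDiff A H = (A \ H) ∪ (H \ A) := Set.symmDiff_def A H
  rw [this]
  refine le_antisymm ((measure_union_le _ _).trans ?_) zero_le
  rw [hi, hii]
  simp

theorem gaussian_first_moment_halfspace (n : ℕ) (A : Set (EuclideanSpace ℝ (Fin n)))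
    (hA : MeasurableSet A) :
    ‖∫ x in A, x ∂(gauss n)‖ ^ 2 ≤ 1 / (2 * Real.pi) ∧
    (‖∫ x in A, x ∂(gauss n)‖ ^ 2 = 1 / (2 * Real.pi) ↔
      ∃ v : EuclideanSpace ℝ (Fin n), v ≠ 0 ∧
        gauss n (symmDiff A {x | 0 ≤ (inner ℝ x v : ℝ)}) = 0) := by
  set m := ∫ x in A, x ∂(gauss n) with hm
  have h2π : (0:ℝ) ≤ 2 * π := by positivity
  have hc2 : ((Real.sqrt (2*π))⁻¹)^2 = 1/(2*π) := by
    rw [inv_pow, Real.sq_sqrt h2π, one_div]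
  have hle : ‖m‖ ≤ (Real.sqrt (2*π))⁻¹ := by
    rcases eq_or_ne m 0 with h | h
    · rw [h, norm_zero]; positivity
    · set u := ‖m‖⁻¹ • m with hu_def
      have hu : ‖u‖ = 1 := norm_smul_inv_norm h
      have h1 : (inner ℝ m u : ℝ) = ‖m‖ := by
        have hm0 : ‖m‖ ≠ 0 := norm_ne_zero_iff.2 h
        rw [hu_def, real_inner_smul_right, real_inner_self_eq_norm_sq]
        field_simp
      calc ‖m‖ = (inner ℝ m u : ℝ) := h1.symm
        _ = ∫ x in A, (inner ℝ x u : ℝ) ∂(gauss n) := by rw [hm, gauss_inner_setIntegral u]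
        _ ≤ (Real.sqrt (2*π))⁻¹ := (gauss_key hA hu).1
  refine ⟨?_, ?_, ?_⟩
  · calc ‖m‖^2 ≤ ((Real.sqrt (2*π))⁻¹)^2 := by
          exact pow_le_pow_left₀ (norm_nonneg m) hle 2
      _ = 1/(2*π) := hc2
  · intro h
    have hsq : ‖m‖^2 = ((Real.sqrt (2*π))⁻¹)^2 := by rw [h, hc2]
    have hnorm : ‖m‖ = (Real.sqrt (2*π))⁻¹ := by
      have := congrArg Real.sqrt hsq
      rwa [Real.sqrt_sq (norm_nonneg m), Real.sqrt_sq (by positivity)] at this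
    have hne : m ≠ 0 := by
      intro h0
      rw [h0, norm_zero] at hnorm
      exact absurd hnorm.symm (ne_of_gt (by positivity))
    set u := ‖m‖⁻¹ • m with hu_def
    have hu : ‖u‖ = 1 := norm_smul_inv_norm hne
    have h1 : (inner ℝ m u : ℝ) = ‖m‖ := by
      have hm0 : ‖m‖ ≠ 0 := norm_ne_zero_iff.2 hne
      rw [hu_def, real_inner_smul_right, real_inner_self_eq_norm_sq]
      field_simp
    refine ⟨u, ?_, ?_⟩
    · intro h0; rw [h0, norm_zero] at hu; exact one_ne_zero hu.symm
    · refine (gauss_key hA hu).2 ?_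
      rw [← gauss_inner_setIntegral u, ← hm, h1, hnorm]
  · rintro ⟨v, hv0, hsym⟩
    set u := ‖v‖⁻¹ • v with hu_def
    have hu : ‖u‖ = 1 := norm_smul_inv_norm hv0
    have hHeq : {x : EuclideanSpace ℝ (Fin n) | 0 ≤ (inner ℝ x v : ℝ)}
        = {x | 0 ≤ (inner ℝ x u : ℝ)} := by
      have hpos : (0:ℝ) < ‖v‖⁻¹ := inv_pos.2 (norm_pos_iff.2 hv0)
      ext x
      simp only [mem_setOf_eq, hu_def, real_inner_smul_right]
      rw [mul_nonneg_iff_of_pos_left hpos]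
    have hae : A =ᵐ[gauss n] {x : EuclideanSpace ℝ (Fin n) | 0 ≤ (inner ℝ x u : ℝ)} := by
      rw [← hHeq]
      exact measure_symmDiff_eq_zero_iff.mp hsym
    have hmv : m = (Real.sqrt (2*π))⁻¹ • u := by
      rw [hm, setIntegral_congr_set hae, gauss_setIntegral_halfspace hu]
    rw [hmv, norm_smul, hu, mul_one, Real.norm_eq_abs, abs_of_nonneg (by positivity), hc2]
end
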